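/- arXiv:2204.10489 — 5 statements merged into one kernel-verified Lean document; each statement's English description precedes it below -/
import Mathlib

section
/- Suppose D_{m,ψ,φ} is bounded and J_w-symmetric on H²(β) with ψ not identically zero. Then ψ vanishes at 0: ψ(0) = 0. -/
open Complex Metric
open scoped InnerProductSpace ComplexConjugate

noncomputable section

/-- `H²(β)` modelled as `ℓ²`: an element `x` represents the analytic function with
Taylor coefficients `aₙ = x n / β n`, so that `‖x‖² = Σ |aₙ|² β(n)²`. -/
abbrev Hs : Type := lp (fun _ : ℕ => ℂ) 2

/-- The analytic function associated to an element with data `x` (coefficients `x n / β n`). -/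
def Fval (β : ℕ → ℝ) (x : ℕ → ℂ) (z : ℂ) : ℂ := ∑' n : ℕ, (x n / (β n : ℂ)) * z ^ n

/-- The conjugation `J_w` at the level of coefficient data: corresponds to
`(J_w f)(z) = conj (f (w * conj z))`, i.e. coefficients `conj aₙ * conj(w)ⁿ`. -/
def Jseq (w : ℂ) (x : ℕ → ℂ) : ℕ → ℂ := fun n => conj (x n) * (conj w) ^ n

/-- Data of the reproducing kernel `K_α(z) = Σ conj(α)ⁿ zⁿ / β(n)²`. -/
def kerSeq (β : ℕ → ℝ) (α : ℂ) : ℕ → ℂ := fun n => (conj α) ^ n / (β n : ℂ)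

/-- Data of the derivative kernel `K_α^{[m]}(z) = Σ_{n≥m} (n!/(n−m)!) conj(α)^{n−m} zⁿ / β(n)²`. -/
def kerDSeq (β : ℕ → ℝ) (m : ℕ) (α : ℂ) : ℕ → ℂ := fun n =>
  if m ≤ n then (n.factorial / (n - m).factorial : ℂ) * (conj α) ^ (n - m) / (β n : ℂ) else 0

/-- Standing assumptions on the weight sequence `β`. -/
def WeightOK (β : ℕ → ℝ) : Prop :=
  (∀ n, 0 < β n) ∧ β 0 = 1 ∧ 1 ≤ Filter.atTop.liminf (fun n : ℕ => (β n) ^ ((1:ℝ)/(n:ℝ)))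

/-- `φ` is an analytic self-map of the unit disc. -/
def SelfMapD (φ : ℂ → ℂ) : Prop :=
  AnalyticOnNhd ℂ φ (ball 0 1) ∧ ∀ z ∈ ball (0:ℂ) 1, φ z ∈ ball (0:ℂ) 1

/-- `T` acts as the generalized weighted composition operator
`D_{m,ψ,φ} f (z) = ψ(z) f^{(m)}(φ(z))` on the disc. -/
def IsGWCO (β : ℕ → ℝ) (m : ℕ) (ψ φ : ℂ → ℂ) (T : Hs →L[ℂ] Hs) : Prop :=
  ∀ (x : Hs), ∀ z ∈ ball (0:ℂ) 1, Fval β (T x) z = ψ z * iteratedDeriv m (Fval β x) (φ z)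

-- auxiliary lemmas

lemma iteratedDeriv_zero_fun (k : ℕ) : iteratedDeriv k (fun _ : ℂ => (0:ℂ)) = fun _ => 0 := by
  induction k with
  | zero => simp
  | succ k ih => rw [iteratedDeriv_succ', deriv_const']; exact ih

lemma iteratedDeriv_one_fun {k : ℕ} (hk : 1 ≤ k) :
    iteratedDeriv k (fun _ : ℂ => (1:ℂ)) = fun _ => 0 := by
  cases k with
  | zero => omega
  | succ k => rw [iteratedDeriv_succ', deriv_const', iteratedDeriv_zero_fun]

lemma iteratedDeriv_monomial (k : ℕ) : ∀ c : ℂ,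
    iteratedDeriv k (fun z : ℂ => c * z ^ k) = fun _ => c * k.factorial := by
  induction k with
  | zero => intro c; funext z; simp
  | succ k ih =>
    intro c
    have hd : deriv (fun z : ℂ => c * z ^ (k+1)) = fun z => (c * (k+1)) * z ^ k := by
      funext z
      rw [deriv_const_mul _ ((differentiable_pow (k+1)).differentiableAt), deriv_pow_field]
      push_cast
      ring
    rw [iteratedDeriv_succ', hd, ih]
    funext z
    rw [Nat.factorial_succ]
    push_cast
    ring

lemma Fval_single (β : ℕ → ℝ) (k : ℕ) (z : ℂ) :
    Fval β ((lp.single 2 k (1:ℂ) : Hs) : ℕ → ℂ) z = (1/(β k : ℂ)) * z ^ k := by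
  unfold Fval
  rw [tsum_eq_single k]
  · rw [lp.single_apply_self]
  · intro n hn
    rw [lp.single_apply_ne _ _ _ hn]
    simp

lemma eq_zero_of_Fval_zero (β : ℕ → ℝ) (hβ : WeightOK β) (y : Hs)
    (h : ∀ z ∈ ball (0:ℂ) 1, Fval β (y : ℕ → ℂ) z = 0) : y = 0 := by
  obtain ⟨hpos, hβ0, hlim⟩ := hβ
  set c : ℕ → ℂ := fun n => (y : ℕ → ℂ) n / (β n : ℂ) with hc
  set p := FormalMultilinearSeries.ofScalars ℂ c with hp
  have hsum : ∀ z, p.sum z = Fval β (y : ℕ → ℂ) z := by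
    intro z
    refine tsum_congr fun n => ?_
    rw [hp, FormalMultilinearSeries.ofScalars_apply_eq, smul_eq_mul]
  have hrad : (1:ENNReal) ≤ p.radius := by
    apply ENNReal.le_of_forall_nnreal_lt
    intro r hr
    have hr1 : (r:ℝ) < 1 := by exact_mod_cast hr
    set s : ℝ := ((r:ℝ) + 1)/2 with hs
    have hrs : (r:ℝ) < s := by rw [hs]; linarith
    have hs1 : s < 1 := by rw [hs]; linarith
    have hs0 : 0 < s := lt_of_le_of_lt r.coe_nonneg hrs
    have hev : ∀ᶠ n in Filter.atTop, s < (β n) ^ ((1:ℝ)/(n:ℝ)) := by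
      refine Filter.eventually_lt_of_lt_liminf (lt_of_lt_of_le hs1 hlim) ?_
      exact Filter.isBoundedUnder_of ⟨0, fun n => Real.rpow_nonneg (hpos n).le _⟩
    have hev2 : ∀ᶠ n in Filter.atTop, ‖p n‖ * (r:ℝ)^n ≤ ‖y‖ := by
      filter_upwards [hev, Filter.eventually_ge_atTop 1] with n hn hn1
      have hβn : s ^ n ≤ β n := by
        have h1 : s ^ n < ((β n) ^ ((1:ℝ)/(n:ℝ)))^n :=
          pow_lt_pow_left₀ hn hs0.le (by omega)
        have h2 : ((β n) ^ ((1:ℝ)/(n:ℝ)))^n = β n := by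
          rw [← Real.rpow_natCast ((β n) ^ ((1:ℝ)/(n:ℝ))) n, ← Real.rpow_mul (hpos n).le,
            one_div, inv_mul_cancel₀ (by exact_mod_cast (by omega : n ≠ 0)), Real.rpow_one]
        linarith [h1, h2.le]
      have hyn : ‖(y : ℕ → ℂ) n‖ ≤ ‖y‖ := lp.norm_apply_le_norm (by norm_num) y n
      have hpn : ‖p n‖ = ‖(y : ℕ → ℂ) n‖ / β n := by
        rw [hp, FormalMultilinearSeries.ofScalars_norm, hc]
        simp [norm_div, Complex.norm_real, Real.norm_eq_abs, abs_of_pos (hpos n)]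
      rw [hpn]
      have hrn : (r:ℝ)^n ≤ s^n := pow_le_pow_left₀ r.coe_nonneg hrs.le n
      calc ‖(y : ℕ → ℂ) n‖ / β n * (r:ℝ)^n = ‖(y : ℕ → ℂ) n‖ * (r:ℝ)^n / β n := by ring
        _ ≤ ‖y‖ * s^n / s^n := by
            apply div_le_div₀ (by positivity) ?_ (by positivity) hβn
            exact mul_le_mul hyn hrn (by positivity) (norm_nonneg _)
        _ = ‖y‖ := by field_simp
    refine p.le_radius_of_isBigO (Asymptotics.IsBigO.of_bound ‖y‖ ?_)
    filter_upwards [hev2] with n hn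
    simpa [_root_.abs_of_nonneg (mul_nonneg (norm_nonneg _) (pow_nonneg r.coe_nonneg n))] using hn
  have hpos' : (0:ENNReal) < p.radius := lt_of_lt_of_le (by norm_num) hrad
  have hat : HasFPowerSeriesAt (Fval β (y : ℕ → ℂ)) p 0 := by
    have := (p.hasFPowerSeriesOnBall hpos').hasFPowerSeriesAt
    exact (funext hsum : p.sum = Fval β (y : ℕ → ℂ)) ▸ this
  have heq : p = 0 := by
    refine hat.eq_zero_of_eventually ?_
    filter_upwards [Metric.ball_mem_nhds (0:ℂ) one_pos] with z hz
    exact h z hz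
  apply lp.ext
  funext n
  have hcn : c n = 0 := by
    have : p n = 0 := by rw [heq]; rfl
    exact (FormalMultilinearSeries.ofScalars_eq_zero ℂ n).mp this
  have hβn : (β n : ℂ) ≠ 0 := by
    exact_mod_cast (hpos n).ne'
  have : (y : ℕ → ℂ) n = 0 := by
    have := hcn
    rw [hc] at this
    field_simp at this
    simpa using this
  simpa [lp.coeFn_zero] using this

/-- if `D_{m,ψ,φ}` is `J_w`-symmetric and `ψ ≢ 0`, then `ψ(0) = 0`. -/
theorem stmt8 (β : ℕ → ℝ) (hβ : WeightOK β) (m : ℕ) (hm : 1 ≤ m)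
    (w : ℂ) (hw : ‖w‖ = 1)
    (ψ φ : ℂ → ℂ) (hφ : SelfMapD φ) (hψa : AnalyticOnNhd ℂ ψ (ball 0 1))
    (hψ0 : ∃ z ∈ ball (0:ℂ) 1, ψ z ≠ 0)
    (T : Hs →L[ℂ] Hs) (hT : IsGWCO β m ψ φ T)
    (J : Hs → Hs) (hJ : ∀ (x : Hs) (n : ℕ), (J x : ℕ → ℂ) n = Jseq w (x : ℕ → ℂ) n)
    (hsym : ∀ x : Hs, T x = J (ContinuousLinearMap.adjoint T (J x))) :
    ψ 0 = 0 := by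
  obtain ⟨hpos, hβ0, hlim⟩ := hβ
  have hwne : w ≠ 0 := by
    intro h0; rw [h0] at hw; simp at hw
  have hwc : conj w ≠ 0 := by simpa using hwne
  -- e0 and em
  have hFe0 : Fval β ((lp.single 2 0 (1:ℂ) : Hs) : ℕ → ℂ) = fun _ => (1:ℂ) := by
    funext z
    rw [Fval_single, hβ0]
    simp
  -- T e0 = 0
  have hTe0 : T (lp.single 2 0 (1:ℂ)) = 0 := by
    apply eq_zero_of_Fval_zero β ⟨hpos, hβ0, hlim⟩
    intro z hz
    rw [hT _ z hz, hFe0, iteratedDeriv_one_fun hm]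
    simp
  -- J e0 = e0
  have hJe0 : J (lp.single 2 0 (1:ℂ)) = lp.single 2 0 (1:ℂ) := by
    apply lp.ext
    funext n
    rw [hJ]
    unfold Jseq
    by_cases hn : n = 0
    · subst hn; rw [lp.single_apply_self]; simp
    · rw [lp.single_apply_ne _ _ _ hn]; simp
  -- J x = 0 → x = 0
  have hJinj : ∀ x : Hs, J x = 0 → x = 0 := by
    intro x hx
    apply lp.ext
    funext n
    have h1 : (J x : ℕ → ℂ) n = 0 := by rw [hx]; simp [lp.coeFn_zero]
    rw [hJ] at h1
    unfold Jseq at h1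
    rcases mul_eq_zero.mp h1 with h2 | h2
    · simpa [lp.coeFn_zero] using (star_eq_zero.mp h2)
    · exact absurd h2 (pow_ne_zero _ hwc)
  -- adjoint T e0 = 0
  have hadj : ContinuousLinearMap.adjoint T (lp.single 2 0 (1:ℂ)) = 0 := by
    refine hJinj _ ?_
    have h1 := hsym (lp.single 2 0 (1:ℂ))
    rw [hJe0] at h1
    rw [← h1, hTe0]
  -- 0-th coefficient of T em vanishes
  have hTm0 : ((T (lp.single 2 m (1:ℂ)) : Hs) : ℕ → ℂ) 0 = 0 := by
    have h1 : ⟪(lp.single 2 0 (1:ℂ) : Hs), T (lp.single 2 m (1:ℂ))⟫_ℂ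
        = ((T (lp.single 2 m (1:ℂ)) : Hs) : ℕ → ℂ) 0 := by
      rw [lp.inner_single_left]
      simp [RCLike.inner_apply]
    have h2 : ⟪(lp.single 2 0 (1:ℂ) : Hs), T (lp.single 2 m (1:ℂ))⟫_ℂ = 0 := by
      rw [← ContinuousLinearMap.adjoint_inner_left T, hadj, inner_zero_left]
    rw [← h1, h2]
  -- evaluate the GWCO identity at z = 0 with x = em
  have hball0 : (0:ℂ) ∈ ball (0:ℂ) 1 := mem_ball_self one_pos
  have hFm : Fval β ((lp.single 2 m (1:ℂ) : Hs) : ℕ → ℂ) = fun z => (1/(β m : ℂ)) * z ^ m :=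
    funext fun z => Fval_single β m z
  have hkey := hT (lp.single 2 m (1:ℂ)) 0 hball0
  rw [hFm, iteratedDeriv_monomial m (1/(β m : ℂ))] at hkey
  have hval : Fval β ((T (lp.single 2 m (1:ℂ)) : Hs) : ℕ → ℂ) 0
      = ((T (lp.single 2 m (1:ℂ)) : Hs) : ℕ → ℂ) 0 := by
    unfold Fval
    rw [tsum_eq_single 0]
    · rw [hβ0]; simp
    · intro n hn
      simp [zero_pow hn]
  rw [hval, hTm0] at hkey
  have hne : (1/(β m : ℂ)) * (m.factorial : ℂ) ≠ 0 := by
    apply mul_ne_zero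
    · simp only [ne_eq, one_div, inv_eq_zero]
      exact_mod_cast (hpos m).ne'
    · exact_mod_cast m.factorial_ne_zero
  have := hkey.symm
  exact (mul_eq_zero.mp this).resolve_right hne
end
end

section
/- Suppose D_{m,ψ,φ} is bounded and J_w-symmetric on H²(β) with ψ not identically zero, and write ψ(z) = z^k h(z) with h(0) ≠ 0. Then k = m, and ψ(z) = (ψ^{(m)}(0) β(m)² / (m!)²) · K^{[m]}_{w·conj(φ(0))}(z). -/
open Complex Metric
open scoped InnerProductSpace ComplexConjugate

noncomputable section

open scoped ENNReal NNReal

/-! ### Auxiliary elementary power-series framework -/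

def SG (δ : ℝ) (a : ℕ → ℂ) : Prop := ∀ r : ℝ, 0 < r → r < δ → Summable (fun j => ‖a j‖ * r ^ j)

def Fsum (a : ℕ → ℂ) (z : ℂ) : ℂ := ∑' j, a j * z ^ j

lemma sg_shift {δ : ℝ} {a : ℕ → ℂ} (ha : SG δ a) : SG δ (fun j => a (j + 1)) := by
  intro r h0 h1
  have S := (summable_nat_add_iff 1).2 (ha r h0 h1)
  refine (S.mul_right r⁻¹).congr fun j => ?_
  field_simp [pow_succ]
  ring

lemma sg_summable_norm {δ : ℝ} {a : ℕ → ℂ} (ha : SG δ a) (hδ : 0 < δ) {z : ℂ} (hz : ‖z‖ < δ) :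
    Summable (fun j => ‖a j‖ * ‖z‖ ^ j) := by
  have hr : 0 < max ‖z‖ (δ / 2) := lt_max_of_lt_right (by linarith)
  have hr1 : max ‖z‖ (δ / 2) < δ := max_lt hz (by linarith)
  refine (ha _ hr hr1).of_nonneg_of_le (fun j => by positivity) fun j => ?_
  exact mul_le_mul_of_nonneg_left (pow_le_pow_left₀ (norm_nonneg z) (le_max_left _ _) j)
    (norm_nonneg _)

lemma sg_summable {δ : ℝ} {a : ℕ → ℂ} (ha : SG δ a) (hδ : 0 < δ) {z : ℂ} (hz : ‖z‖ < δ) :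
    Summable (fun j => a j * z ^ j) := by
  refine Summable.of_norm ((sg_summable_norm ha hδ hz).congr fun j => ?_)
  simp [norm_mul, norm_pow]

lemma Fsum_shift {δ : ℝ} {a : ℕ → ℂ} (ha : SG δ a) (hδ : 0 < δ) {z : ℂ} (hz : ‖z‖ < δ) :
    Fsum a z = a 0 + z * Fsum (fun j => a (j + 1)) z := by
  have h := Summable.tsum_eq_zero_add (sg_summable ha hδ hz)
  rw [Fsum, h, pow_zero, mul_one]
  congr 1
  rw [Fsum, ← tsum_mul_left]
  congr 1; ext j; ring

lemma Fsum_tendsto {δ : ℝ} {a : ℕ → ℂ} (ha : SG δ a) (hδ : 0 < δ) :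
    Filter.Tendsto (Fsum a) (nhds 0) (nhds (a 0)) := by
  set a' : ℕ → ℂ := fun j => a (j + 1) with ha'
  have hsg' : SG δ a' := sg_shift ha
  set M : ℝ := ∑' j, ‖a' j‖ * (δ / 2) ^ j with hM
  have hsum' : Summable (fun j => ‖a' j‖ * (δ / 2) ^ j) := hsg' _ (by linarith) (by linarith)
  have key : ∀ z : ℂ, ‖z‖ ≤ δ / 2 → ‖Fsum a z - a 0‖ ≤ M * ‖z‖ := by
    intro z hz
    have hzδ : ‖z‖ < δ := lt_of_le_of_lt hz (by linarith)
    rw [Fsum_shift ha hδ hzδ]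
    have h1 : ‖a 0 + z * Fsum a' z - a 0‖ = ‖z‖ * ‖Fsum a' z‖ := by
      rw [add_sub_cancel_left, norm_mul]
    rw [h1, mul_comm M ‖z‖]
    have hnz : Summable (fun j => ‖a' j * z ^ j‖) :=
      (sg_summable_norm hsg' hδ hzδ).congr fun j => by simp [norm_mul, norm_pow]
    have hb : ‖Fsum a' z‖ ≤ M := by
      calc ‖Fsum a' z‖ ≤ ∑' j, ‖a' j * z ^ j‖ := norm_tsum_le_tsum_norm hnz
        _ ≤ M := by
            refine Summable.tsum_le_tsum (fun j => ?_) hnz hsum'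
            rw [norm_mul, norm_pow]
            exact mul_le_mul_of_nonneg_left (pow_le_pow_left₀ (norm_nonneg z) hz j)
              (norm_nonneg _)
    exact mul_le_mul_of_nonneg_left hb (norm_nonneg z)
  have h0 : Filter.Tendsto (fun z : ℂ => Fsum a z - a 0) (nhds 0) (nhds 0) := by
    apply squeeze_zero_norm' (a := fun z : ℂ => M * ‖z‖)
    · filter_upwards [Metric.closedBall_mem_nhds (0 : ℂ) (by linarith : (0:ℝ) < δ / 2)] with z hz
      exact key z (by simpa [Metric.mem_closedBall, dist_eq_norm] using hz)
    · have : Filter.Tendsto (fun z : ℂ => M * ‖z‖) (nhds 0) (nhds (M * ‖(0:ℂ)‖)) :=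
        (continuous_norm.tendsto (0:ℂ)).const_mul M
      simpa using this
  have := h0.add_const (a 0)
  simpa using this

lemma extract : ∀ (p : ℕ) (a : ℕ → ℂ) (G : ℂ → ℂ) (δ : ℝ), 0 < δ → SG δ a →
    ContinuousAt G 0 → (∀ z : ℂ, ‖z‖ < δ → z ≠ 0 → Fsum a z = z ^ p * G z) →
    (∀ j < p, a j = 0) ∧ a p = G 0 := by
  intro p
  induction p with
  | zero =>
    intro a G δ hδ ha hG heq
    refine ⟨fun j hj => absurd hj (Nat.not_lt_zero j), ?_⟩
    have h1 : Filter.Tendsto (Fsum a) (nhdsWithin 0 {(0:ℂ)}ᶜ) (nhds (a 0)) :=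
      (Fsum_tendsto ha hδ).mono_left nhdsWithin_le_nhds
    have h2 : Filter.Tendsto (Fsum a) (nhdsWithin 0 {(0:ℂ)}ᶜ) (nhds (G 0)) := by
      refine Filter.Tendsto.congr' ?_ (hG.continuousWithinAt.tendsto)
      filter_upwards [self_mem_nhdsWithin,
        nhdsWithin_le_nhds (Metric.ball_mem_nhds (0:ℂ) hδ)] with z hz hzb
      rw [heq z (by simpa [Metric.mem_ball, dist_eq_norm] using hzb) hz, pow_zero, one_mul]
    exact tendsto_nhds_unique h1 h2
  | succ p ih =>
    intro a G δ hδ ha hG heq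
    have ha' : SG δ (fun j => a (j + 1)) := sg_shift ha
    have ha0 : a 0 = 0 := by
      have h1 : Filter.Tendsto (Fsum a) (nhdsWithin 0 {(0:ℂ)}ᶜ) (nhds (a 0)) :=
        (Fsum_tendsto ha hδ).mono_left nhdsWithin_le_nhds
      have h2 : Filter.Tendsto (Fsum a) (nhdsWithin 0 {(0:ℂ)}ᶜ) (nhds 0) := by
        have hz : Filter.Tendsto (fun z : ℂ => z ^ (p + 1) * G z) (nhds 0) (nhds 0) := by
          have := ((continuous_pow (p+1)).tendsto (0:ℂ)).mul hG.tendsto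
          simpa using this
        refine Filter.Tendsto.congr' ?_ (hz.mono_left nhdsWithin_le_nhds)
        filter_upwards [self_mem_nhdsWithin,
          nhdsWithin_le_nhds (Metric.ball_mem_nhds (0:ℂ) hδ)] with z hz hzb
        exact (heq z (by simpa [Metric.mem_ball, dist_eq_norm] using hzb) hz).symm
      exact tendsto_nhds_unique h1 h2
    have heq' : ∀ z : ℂ, ‖z‖ < δ → z ≠ 0 → Fsum (fun j => a (j+1)) z = z ^ p * G z := by
      intro z hzδ hz
      have h3 := Fsum_shift ha hδ hzδ
      rw [ha0, zero_add, heq z hzδ hz, pow_succ, mul_comm (z^p) z, mul_assoc] at h3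
      exact (mul_left_cancel₀ hz h3.symm)
    obtain ⟨hlt, hp⟩ := ih (fun j => a (j+1)) G δ hδ ha' hG heq'
    refine ⟨fun j hj => ?_, hp⟩
    cases j with
    | zero => exact ha0
    | succ i => exact hlt i (Nat.succ_lt_succ_iff.mp hj)

lemma iter_mono (c : ℂ) (n : ℕ) :
    ∀ i, iteratedDeriv i (fun z : ℂ => c * z ^ n) =
      fun z => c * (n.descFactorial i : ℂ) * z ^ (n - i) := by
  intro i
  induction i with
  | zero => simp
  | succ i ih =>
    rw [iteratedDeriv_succ, ih]
    funext z
    have hd : deriv (fun z : ℂ => c * (n.descFactorial i : ℂ) * z ^ (n - i)) z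
        = c * (n.descFactorial i : ℂ) * ((n - i : ℕ) * z ^ (n - i - 1)) := by
      rw [deriv_const_mul _ (differentiable_pow (n - i)).differentiableAt, deriv_pow_field]
    rw [hd, Nat.descFactorial_succ, Nat.sub_sub]
    push_cast
    ring

lemma sg_lp (β : ℕ → ℝ) (hpos : ∀ n, 0 < β n)
    (hlim : 1 ≤ Filter.atTop.liminf (fun n : ℕ => (β n) ^ ((1:ℝ)/(n:ℝ)))) (y : Hs) :
    SG 1 (fun j => (y : ℕ → ℂ) j / (β j : ℂ)) := by
  intro r h0 h1
  set c : ℝ := (1 + r) / 2 with hc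
  have hrc : r < c := by rw [hc]; linarith
  have hc1 : c < 1 := by rw [hc]; linarith
  have hc0 : 0 < c := by rw [hc]; linarith
  have hbdd : Filter.IsBoundedUnder (· ≥ ·) Filter.atTop
      (fun n : ℕ => (β n) ^ ((1:ℝ)/(n:ℝ))) := by
    refine ⟨0, ?_⟩
    rw [Filter.eventually_map]
    exact Filter.Eventually.of_forall fun n => Real.rpow_nonneg (hpos n).le _
  have hev : ∀ᶠ n in Filter.atTop, c < (β n) ^ ((1:ℝ)/(n:ℝ)) :=
    Filter.eventually_lt_of_lt_liminf (lt_of_lt_of_le hc1 hlim) hbdd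
  have hev2 : ∀ᶠ j in Filter.atTop, c ^ j ≤ β j := by
    filter_upwards [hev, Filter.eventually_ge_atTop 1] with n hn hn1
    have hne : (n : ℝ) ≠ 0 := Nat.cast_ne_zero.mpr (by omega)
    have heq : ((β n) ^ ((1:ℝ)/(n:ℝ))) ^ (n : ℕ) = β n := by
      rw [← Real.rpow_natCast ((β n) ^ ((1:ℝ)/(n:ℝ))) n, ← Real.rpow_mul (hpos n).le,
        one_div, inv_mul_cancel₀ hne, Real.rpow_one]
    calc c ^ n ≤ ((β n) ^ ((1:ℝ)/(n:ℝ))) ^ n := pow_le_pow_left₀ hc0.le hn.le n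
      _ = β n := heq
  refine Summable.of_norm_bounded_eventually_nat (g := fun j => ‖y‖ * (r / c) ^ j) ?_ ?_
  · exact (summable_geometric_of_lt_one (div_nonneg h0.le hc0.le)
      ((div_lt_one hc0).mpr hrc)).mul_left ‖y‖
  · filter_upwards [hev2] with j hj
    have hb : (0:ℝ) < β j := hpos j
    have h1' : ‖(y : ℕ → ℂ) j / (β j : ℂ)‖ = ‖(y : ℕ → ℂ) j‖ / β j := by
      rw [norm_div, Complex.norm_real, Real.norm_of_nonneg hb.le]
    have hterm : ‖(y : ℕ → ℂ) j / (β j : ℂ)‖ * r ^ j ≤ ‖y‖ * (r / c) ^ j := by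
      rw [h1', div_pow, div_mul_eq_mul_div, mul_div_assoc']
      refine div_le_div₀ (by positivity) ?_ (by positivity) hj
      exact mul_le_mul_of_nonneg_right (lp.norm_apply_le_norm (by norm_num) y j)
        (by positivity)
    calc ‖‖(y : ℕ → ℂ) j / (β j : ℂ)‖ * r ^ j‖ = ‖(y : ℕ → ℂ) j / (β j : ℂ)‖ * r ^ j := by
          rw [Real.norm_of_nonneg (by positivity)]
      _ ≤ ‖y‖ * (r / c) ^ j := hterm

def Ebasis (n : ℕ) : Hs := lp.single 2 n 1

lemma Ebasis_apply (n j : ℕ) : (Ebasis n : ℕ → ℂ) j = if j = n then 1 else 0 := by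
  simp [Ebasis, lp.single_apply, Pi.single_apply]

lemma Fval_Ebasis (β : ℕ → ℝ) (n : ℕ) :
    Fval β (Ebasis n : ℕ → ℂ) = fun z => (β n : ℂ)⁻¹ * z ^ n := by
  funext z
  rw [Fval, tsum_eq_single n (fun j hj => by rw [Ebasis_apply, if_neg hj, zero_div, zero_mul])]
  rw [Ebasis_apply, if_pos rfl, one_div]

lemma adjoint_coord (T : Hs →L[ℂ] Hs) (y : Hs) (j : ℕ) :
    ((ContinuousLinearMap.adjoint T y : Hs) : ℕ → ℂ) j = inner (𝕜 := ℂ) (T (Ebasis j)) y := by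
  have h1 : (inner (𝕜 := ℂ) (Ebasis j) (ContinuousLinearMap.adjoint T y))
      = ((ContinuousLinearMap.adjoint T y : Hs) : ℕ → ℂ) j := by
    rw [Ebasis, lp.inner_single_left, RCLike.inner_apply, map_one, mul_one]
  rw [← h1, ContinuousLinearMap.adjoint_inner_right]

lemma adjoint_coord' (T : Hs →L[ℂ] Hs) (n j : ℕ) :
    ((ContinuousLinearMap.adjoint T (Ebasis n) : Hs) : ℕ → ℂ) j
      = conj ((T (Ebasis j) : ℕ → ℂ) n) := by
  rw [adjoint_coord]
  simp only [Ebasis]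
  rw [lp.inner_single_right, RCLike.inner_apply, one_mul]


/-- if `ψ(z) = z^k h(z)`, `h(0) ≠ 0` and `D_{m,ψ,φ}` is `J_w`-symmetric,
then `k = m` and `ψ = (ψ^{(m)}(0) β(m)²/(m!)²) K^{[m]}_{w conj(φ(0))}`. -/
theorem stmt9 (β : ℕ → ℝ) (hβ : WeightOK β) (m : ℕ) (hm : 1 ≤ m)
    (w : ℂ) (hw : ‖w‖ = 1)
    (ψ φ : ℂ → ℂ) (hφ : SelfMapD φ) (hψa : AnalyticOnNhd ℂ ψ (ball 0 1))
    (hψ0 : ∃ z ∈ ball (0:ℂ) 1, ψ z ≠ 0)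
    (k : ℕ) (h : ℂ → ℂ) (hha : AnalyticOnNhd ℂ h (ball 0 1)) (hh0 : h 0 ≠ 0)
    (hfac : ∀ z ∈ ball (0:ℂ) 1, ψ z = z ^ k * h z)
    (T : Hs →L[ℂ] Hs) (hT : IsGWCO β m ψ φ T)
    (J : Hs → Hs) (hJ : ∀ (x : Hs) (n : ℕ), (J x : ℕ → ℂ) n = Jseq w (x : ℕ → ℂ) n)
    (hsym : ∀ x : Hs, T x = J (ContinuousLinearMap.adjoint T (J x))) :
    k = m ∧ ∀ z ∈ ball (0:ℂ) 1,
      ψ z = iteratedDeriv m ψ 0 * (β m : ℂ) ^ 2 / ((m.factorial : ℂ)) ^ 2 *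
        Fval β (kerDSeq β m (w * conj (φ 0))) z := by
  classical
  obtain ⟨hpos, hβ0, hlim⟩ := hβ
  have ball0 : (0:ℂ) ∈ ball (0:ℂ) 1 := by simp
  have hβC : ∀ j, (β j : ℂ) ≠ 0 := fun j => Complex.ofReal_ne_zero.mpr (hpos j).ne'
  have hmC : (m.factorial : ℂ) ≠ 0 := Nat.cast_ne_zero.mpr m.factorial_ne_zero
  set A : ℕ → ℕ → ℂ := fun n j => (T (Ebasis n) : ℕ → ℂ) j with hA
  have hFF : ∀ x : Hs, Fsum (fun j => (x : ℕ → ℂ) j / (β j : ℂ)) = Fval β (x : ℕ → ℂ) :=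
    fun x => rfl
  have hSG : ∀ n, SG 1 (fun j => A n j / (β j : ℂ)) := fun n => sg_lp β hpos hlim (T (Ebasis n))
  have hTE : ∀ n, ∀ z : ℂ, ‖z‖ < 1 → Fval β (T (Ebasis n) : ℕ → ℂ) z
      = ψ z * ((β n : ℂ)⁻¹ * (n.descFactorial m : ℂ) * φ z ^ (n - m)) := by
    intro n z hz
    rw [hT (Ebasis n) z (mem_ball_zero_iff.mpr hz), Fval_Ebasis β n, iter_mono]
  have e1 : ∀ n, n < m → ∀ j, A n j = 0 := by
    intro n hn j
    have hz : ∀ z : ℂ, ‖z‖ < 1 → z ≠ 0 →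
        Fsum (fun i => A n i / (β i : ℂ)) z = z ^ j * (fun _ : ℂ => (0:ℂ)) z := by
      intro z hz _
      rw [hFF (T (Ebasis n)), hTE n z hz, Nat.cast_eq_zero.mpr
        (Nat.descFactorial_eq_zero_iff_lt.mpr hn)]
      ring
    have h5 := (extract j _ _ 1 one_pos (hSG n) continuousAt_const hz).2
    exact (div_eq_zero_iff.mp h5).resolve_right (hβC j)
  have hJE : ∀ n, J (Ebasis n) = (conj w) ^ n • Ebasis n := by
    intro n
    apply lp.ext
    funext i
    rw [hJ]
    simp only [Jseq, lp.coeFn_smul, Pi.smul_apply, smul_eq_mul, Ebasis_apply]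
    split_ifs with hin
    · subst hin; simp
    · simp
  have hsymA : ∀ n j, A n j = w ^ n * conj w ^ j * A j n := by
    intro n j
    have h2 : A n j = conj ((ContinuousLinearMap.adjoint T (J (Ebasis n)) : ℕ → ℂ) j)
        * conj w ^ j := by
      show (T (Ebasis n) : ℕ → ℂ) j = _
      rw [hsym (Ebasis n), hJ]
      rfl
    have h3 : ContinuousLinearMap.adjoint T (J (Ebasis n))
        = conj w ^ n • ContinuousLinearMap.adjoint T (Ebasis n) := by
      rw [hJE, map_smul]
    rw [h2, h3]
    simp only [lp.coeFn_smul, Pi.smul_apply, smul_eq_mul, adjoint_coord']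
    simp only [map_mul, map_pow, Complex.conj_conj]
    show w ^ n * A j n * conj w ^ j = _
    ring
  set cc : ℕ → ℂ := fun j => ((β m : ℂ) / (m.factorial : ℂ)) * (A m j / (β j : ℂ)) with hcc
  have hSGc : SG 1 cc := by
    intro r h0 h1
    refine ((hSG m r h0 h1).mul_left ‖(β m : ℂ) / (m.factorial : ℂ)‖).congr fun j => ?_
    simp only [hcc, norm_mul]
    ring
  have hψrep : ∀ z : ℂ, ‖z‖ < 1 → Fsum cc z = ψ z := by
    intro z hz
    have h1 : Fsum cc z = ((β m : ℂ) / (m.factorial : ℂ))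
        * Fsum (fun j => A m j / (β j : ℂ)) z := by
      rw [Fsum, Fsum, ← tsum_mul_left]
      congr 1; funext j; simp only [hcc]; ring
    rw [h1, hFF (T (Ebasis m)), hTE m z hz, Nat.descFactorial_self, Nat.sub_self, pow_zero,
      mul_one]
    field_simp [hβC m, hmC]
  have hkext := extract k cc h 1 one_pos hSGc (hha 0 ball0).continuousAt
    (fun z hz _ => by rw [hψrep z hz, hfac z (mem_ball_zero_iff.mpr hz)])
  have hck : cc k = h 0 := hkext.2
  have hlow : ∀ j, j < m → cc j = 0 := by
    intro j hj
    simp only [hcc]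
    rw [hsymA m j, e1 j hj m]
    ring
  have hkm : k = m := by
    rcases lt_trichotomy k m with hlt' | he | hgt
    · exact absurd (hck.symm.trans (hlow k hlt')) hh0
    · exact he
    · exfalso
      have hGc : ContinuousAt
          (fun z => h z * ((β k : ℂ)⁻¹ * (k.descFactorial m : ℂ) * φ z ^ (k - m))) 0 :=
        ((hha 0 ball0).continuousAt.mul
          (continuousAt_const.mul (((hφ.1 0 ball0).continuousAt.pow (k - m)))))
      have hpe : ∀ z : ℂ, ‖z‖ < 1 → z ≠ 0 → Fsum (fun i => A k i / (β i : ℂ)) z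
          = z ^ k * (fun z => h z
              * ((β k : ℂ)⁻¹ * (k.descFactorial m : ℂ) * φ z ^ (k - m))) z := by
        intro z hz _
        rw [hFF (T (Ebasis k)), hTE k z hz, hfac z (mem_ball_zero_iff.mpr hz)]
        ring
      have h5 := (extract k _ _ 1 one_pos (hSG k) hGc hpe).1 m hgt
      have hAkm : A k m = 0 := (div_eq_zero_iff.mp h5).resolve_right (hβC m)
      have h6 : cc k = 0 := by
        simp only [hcc]
        rw [hsymA m k, hAkm]
        ring
      rw [hck] at h6
      exact hh0 h6
  have hcm : cc m = h 0 := hkm ▸ hck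
  obtain ⟨p, hp⟩ := hψa 0 ball0
  obtain ⟨r, hpr⟩ := hp
  have hval : iteratedDeriv m ψ 0 = (m.factorial : ℂ) * p.coeff m := by
    rw [iteratedDeriv_eq_iteratedFDeriv, ← hpr.factorial_smul 1 m,
      FormalMultilinearSeries.apply_eq_pow_smul_coeff, one_pow, one_smul, nsmul_eq_mul]
  obtain ⟨ρ, hρ0, hρr⟩ := ENNReal.lt_iff_exists_nnreal_btwn.mp hpr.r_pos
  have hρ0' : (0:ℝ) < (ρ : ℝ) := by exact_mod_cast ENNReal.coe_pos.mp hρ0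
  set δ : ℝ := min (ρ : ℝ) 1 with hδdef
  have hδ0 : 0 < δ := lt_min hρ0' one_pos
  have hSGp : SG δ (fun j => p.coeff j) := by
    intro r' h0' h1'
    have hr'ρ : r' < (ρ : ℝ) := lt_of_lt_of_le h1' (min_le_left _ _)
    have hr' : (r'.toNNReal : ℝ≥0∞) < p.radius :=
      lt_of_lt_of_le (lt_trans (ENNReal.coe_lt_coe.mpr
        ((Real.toNNReal_lt_iff_lt_coe h0'.le).mpr hr'ρ)) hρr) hpr.r_le
    have hsum := p.summable_norm_mul_pow hr'
    refine hsum.of_nonneg_of_le (fun j => by positivity) fun j => ?_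
    have h7 := (p j).le_opNorm (fun _ => (1:ℂ))
    have h8 : ((p j) fun _ => (1:ℂ)) = p.coeff j := by
      rw [FormalMultilinearSeries.apply_eq_pow_smul_coeff, one_pow, one_smul]
    rw [h8] at h7
    simp only [norm_one, Finset.prod_const_one, mul_one] at h7
    calc ‖p.coeff j‖ * r' ^ j ≤ ‖p j‖ * r' ^ j :=
          mul_le_mul_of_nonneg_right h7 (by positivity)
      _ = ‖p j‖ * (r'.toNNReal : ℝ) ^ j := by rw [Real.coe_toNNReal _ h0'.le]
  have hψp : ∀ z : ℂ, ‖z‖ < δ → Fsum (fun j => p.coeff j) z = ψ z := by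
    intro z hz
    have hzρ : ‖z‖₊ < ρ := by
      have h10 : ‖z‖ < (ρ : ℝ) := lt_of_lt_of_le hz (min_le_left _ _)
      exact_mod_cast h10
    have hzb : z ∈ Metric.eball (0:ℂ) r := by
      rw [Metric.mem_eball, edist_zero_right]
      exact lt_trans (ENNReal.coe_lt_coe.mpr hzρ) hρr
    have hs := hpr.hasSum hzb
    rw [zero_add] at hs
    rw [Fsum, ← hs.tsum_eq]
    congr 1; funext n
    rw [FormalMultilinearSeries.apply_eq_pow_smul_coeff, smul_eq_mul]
    ring
  have hdiff : ∀ j, cc j = p.coeff j := by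
    intro j
    set d : ℕ → ℂ := fun i => cc i - p.coeff i with hd
    have hSGd : SG δ d := by
      intro r' h0' h1'
      have h1c := hSGc r' h0' (lt_of_lt_of_le h1' (min_le_right _ _))
      have h1p := hSGp r' h0' h1'
      refine (h1c.add h1p).of_nonneg_of_le (fun i => by positivity) fun i => ?_
      simp only [hd]
      calc ‖cc i - p.coeff i‖ * r' ^ i ≤ (‖cc i‖ + ‖p.coeff i‖) * r' ^ i :=
            mul_le_mul_of_nonneg_right (norm_sub_le _ _) (by positivity)
        _ = ‖cc i‖ * r' ^ i + ‖p.coeff i‖ * r' ^ i := add_mul _ _ _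
    have hzero : ∀ z : ℂ, ‖z‖ < δ → z ≠ 0 → Fsum d z = z ^ j * (fun _ : ℂ => (0:ℂ)) z := by
      intro z hz _
      have hz1 : ‖z‖ < 1 := lt_of_lt_of_le hz (min_le_right _ _)
      have hsc := sg_summable hSGc one_pos hz1
      have hsp := sg_summable hSGp hδ0 hz
      have heq : (fun i => d i * z ^ i) = fun i => cc i * z ^ i - p.coeff i * z ^ i :=
        funext fun i => by simp only [hd]; ring
      rw [Fsum, heq, Summable.tsum_sub hsc hsp]
      have e1' : (∑' i, cc i * z ^ i) = Fsum cc z := rfl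
      have e2' : (∑' i, p.coeff i * z ^ i) = Fsum (fun i => p.coeff i) z := rfl
      rw [e1', e2', hψrep z hz1, hψp z hz]
      ring
    have h9 := (extract j d _ δ hδ0 hSGd continuousAt_const hzero).2
    exact sub_eq_zero.mp h9
  have hIter : iteratedDeriv m ψ 0 = (m.factorial : ℂ) * cc m := by rw [hval, hdiff m]
  refine ⟨hkm, ?_⟩
  intro z hz
  set α : ℂ := w * conj (φ 0) with hα
  have hwc : w * conj w = 1 := by
    have hns : Complex.normSq w = 1 := by
      rw [Complex.normSq_eq_norm_sq, hw]; norm_num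
    rw [Complex.mul_conj, hns, Complex.ofReal_one]
  have hKc : ∀ j, iteratedDeriv m ψ 0 * (β m : ℂ) ^ 2 / ((m.factorial : ℂ)) ^ 2
      * (kerDSeq β m α j / (β j : ℂ)) = cc j := by
    intro j
    by_cases hj : m ≤ j
    · rw [kerDSeq, if_pos hj]
      have hGc : ContinuousAt
          (fun z => h z * ((β j : ℂ)⁻¹ * (j.descFactorial m : ℂ) * φ z ^ (j - m))) 0 :=
        ((hha 0 ball0).continuousAt.mul
          (continuousAt_const.mul (((hφ.1 0 ball0).continuousAt.pow (j - m)))))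
      have hpe : ∀ z : ℂ, ‖z‖ < 1 → z ≠ 0 → Fsum (fun i => A j i / (β i : ℂ)) z
          = z ^ m * (fun z => h z
              * ((β j : ℂ)⁻¹ * (j.descFactorial m : ℂ) * φ z ^ (j - m))) z := by
        intro z hz0 _
        rw [hFF (T (Ebasis j)), hTE j z hz0, hfac z (mem_ball_zero_iff.mpr hz0), hkm]
        ring
      have hAj := (extract m _ _ 1 one_pos (hSG j) hGc hpe).2
      have hAjm : A j m = (h 0 * ((β j : ℂ)⁻¹ * (j.descFactorial m : ℂ) * φ 0 ^ (j - m)))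
          * (β m : ℂ) := by
        rw [← hAj, div_mul_cancel₀ _ (hβC m)]
      have hfd : (j.factorial : ℂ) / ((j - m).factorial : ℂ) = (j.descFactorial m : ℂ) := by
        rw [div_eq_iff (Nat.cast_ne_zero.mpr (j - m).factorial_ne_zero)]
        rw [← Nat.cast_mul]
        congr 1
        rw [mul_comm]
        exact (Nat.factorial_mul_descFactorial hj).symm
      have hconjα : conj α = conj w * φ 0 := by
        rw [hα, map_mul, Complex.conj_conj]
      have hww : w ^ m * conj w ^ j = conj w ^ (j - m) := by
        have hjm : conj w ^ j = conj w ^ m * conj w ^ (j - m) := by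
          rw [← pow_add]; congr 1; omega
        rw [hjm, ← mul_assoc, ← mul_pow, hwc, one_pow, one_mul]
      simp only [hcc]
      rw [hsymA m j, hww, hAjm, hIter, hcm, hfd, hconjα, mul_pow]
      field_simp [hmC, hβC j]
    · rw [kerDSeq, if_neg hj, hlow j (by omega)]
      ring
  rw [← hψrep z (mem_ball_zero_iff.mp hz), Fval, ← tsum_mul_left, Fsum]
  congr 1
  funext j
  rw [← hKc j]
  ring
end
end

section
/- Let m ≥ 1, a₁ ∈ 𝔻, a₂ ∈ ℂ, and define φ(z) = a₁ z and ψ(z) = (a₂/m!) z^m. If D_{m,ψ,φ} is bounded on H²(β), then it is J_w-symmetric: J_w D_{m,ψ,φ}* K_α = D_{m,ψ,φ} J_w K_α for all α ∈ 𝔻. -/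
open Complex Metric
open scoped InnerProductSpace ComplexConjugate

noncomputable section

/-! ### Auxiliary lemmas -/

private lemma beta_ne {β : ℕ → ℝ} (hβ : WeightOK β) (n : ℕ) : (β n : ℂ) ≠ 0 :=
  Complex.ofReal_ne_zero.2 (ne_of_gt (hβ.1 n))

/-- The liminf condition gives an eventual lower bound `t ^ n ≤ β n`, for every `t < 1`. -/
private lemma beta_eventually {β : ℕ → ℝ} (hβ : WeightOK β) {t : ℝ} (ht0 : 0 < t) (ht1 : t < 1) :
    ∀ᶠ n in Filter.atTop, t ^ n ≤ β n := by
  have h1 : ∀ᶠ n in Filter.atTop, t < (β n) ^ ((1:ℝ)/(n:ℝ)) := by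
    have hbd : Filter.IsBoundedUnder (· ≥ ·) Filter.atTop
        (fun n : ℕ => (β n) ^ ((1:ℝ)/(n:ℝ))) :=
      ⟨0, Filter.eventually_map.2 (Filter.Eventually.of_forall fun n =>
        Real.rpow_nonneg (le_of_lt (hβ.1 n)) _)⟩
    exact Filter.eventually_lt_of_lt_liminf (lt_of_lt_of_le ht1 hβ.2.2) hbd
  filter_upwards [h1, Filter.eventually_ge_atTop 1] with n hn hn1
  have hb0 : (0:ℝ) ≤ β n := le_of_lt (hβ.1 n)
  have h2 : t ^ n ≤ ((β n) ^ ((1:ℝ)/(n:ℝ))) ^ n := pow_le_pow_left₀ (le_of_lt ht0) (le_of_lt hn) n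
  calc t ^ n ≤ ((β n) ^ ((1:ℝ)/(n:ℝ))) ^ n := h2
    _ = β n := by
        rw [← Real.rpow_natCast ((β n) ^ ((1:ℝ)/(n:ℝ))) n, ← Real.rpow_mul hb0]
        rw [one_div, inv_mul_cancel₀ (Nat.cast_ne_zero.mpr (by omega) : (n:ℝ) ≠ 0)]
        exact Real.rpow_one _

/-- Radius of a power series whose coefficients grow slower than any geometric `t⁻ⁿ`. -/
private lemma radius_ge_one (c : ℕ → ℂ)
    (h : ∀ t : ℝ, 0 < t → t < 1 → ∃ C : ℝ, 0 ≤ C ∧ ∀ᶠ n in Filter.atTop, ‖c n‖ ≤ C / t ^ n) :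
    1 ≤ (FormalMultilinearSeries.ofScalars ℂ c).radius := by
  apply ENNReal.le_of_forall_nnreal_lt
  intro r hr
  have hr1 : (r : ℝ) < 1 := by exact_mod_cast hr
  set t : ℝ := ((r : ℝ) + 1) / 2 with htdef
  have hr0 : (0:ℝ) ≤ r := r.coe_nonneg
  have ht0 : 0 < t := by positivity
  have htr : (r : ℝ) ≤ t := by simp only [htdef]; linarith
  have ht1 : t < 1 := by simp only [htdef]; linarith
  obtain ⟨C, hC0, hC⟩ := h t ht0 ht1
  apply FormalMultilinearSeries.le_radius_of_eventually_le _ C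
  filter_upwards [hC] with n hn
  rw [FormalMultilinearSeries.ofScalars_norm]
  have h1 : (r:ℝ) ^ n ≤ t ^ n := pow_le_pow_left₀ hr0 htr n
  have h2 : ‖c n‖ * (r:ℝ) ^ n ≤ (C / t ^ n) * t ^ n :=
    mul_le_mul hn h1 (by positivity) (by positivity)
  calc ‖c n‖ * (r:ℝ) ^ n ≤ (C / t ^ n) * t ^ n := h2
    _ = C := div_mul_cancel₀ C (by positivity)

private def pser (β : ℕ → ℝ) (x : ℕ → ℂ) : FormalMultilinearSeries ℂ ℂ ℂ :=
  FormalMultilinearSeries.ofScalars ℂ (fun n => x n / (β n : ℂ))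

private lemma hasfp {β : ℕ → ℝ} (x : ℕ → ℂ) (hx : 1 ≤ (pser β x).radius) :
    HasFPowerSeriesOnBall (Fval β x) (pser β x) 0 1 := by
  refine ⟨hx, zero_lt_one, fun {y} hy => ?_⟩
  have h1 := ((pser β x).hasFPowerSeriesOnBall
    (lt_of_lt_of_le zero_lt_one hx)).hasSum (EMetric.ball_subset_ball hx hy)
  have e1 : Fval β x (0 + y) = (pser β x).sum (0 + y) := by
    simp only [FormalMultilinearSeries.sum, Fval]
    refine tsum_congr fun n => ?_
    rw [pser, FormalMultilinearSeries.ofScalars_apply_eq, smul_eq_mul]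
  rw [e1]
  exact h1

private lemma radius_of_lp {β : ℕ → ℝ} (hβ : WeightOK β) (x : Hs) :
    1 ≤ (pser β (⇑x)).radius := by
  apply radius_ge_one
  intro t ht0 ht1
  refine ⟨‖x‖, norm_nonneg x, ?_⟩
  filter_upwards [beta_eventually hβ ht0 ht1] with n hn
  have hb : 0 < β n := lt_of_lt_of_le (by positivity) hn
  have h1 : ‖x n / (β n : ℂ)‖ = ‖x n‖ / β n := by
    rw [norm_div, Complex.norm_real, Real.norm_eq_abs, abs_of_pos hb]
  rw [h1]
  have h2 : ‖x n‖ ≤ ‖x‖ := lp.norm_apply_le_norm (by norm_num) x n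
  have h3 : ‖x n‖ / β n ≤ ‖x‖ / t ^ n :=
    div_le_div₀ (norm_nonneg x) h2 (by positivity) hn
  exact h3

/-- Two `ℓ²` elements with the same associated analytic function on the disc are equal. -/
private lemma fval_inj {β : ℕ → ℝ} (hβ : WeightOK β) (x y : Hs)
    (h : ∀ z ∈ ball (0:ℂ) 1, Fval β (⇑x) z = Fval β (⇑y) z) : x = y := by
  have hx := (hasfp (β := β) (⇑x) (radius_of_lp hβ x)).hasFPowerSeriesAt
  have hy := (hasfp (β := β) (⇑y) (radius_of_lp hβ y)).hasFPowerSeriesAt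
  have hev : ∀ᶠ z in nhds (0:ℂ), Fval β (⇑x) z = Fval β (⇑y) z :=
    Filter.eventually_iff_exists_mem.2 ⟨ball 0 1, Metric.ball_mem_nhds 0 one_pos, h⟩
  have hpq : pser β (⇑x) = pser β (⇑y) :=
    hx.eq_formalMultilinearSeries_of_eventually hy hev
  have hcoef := FormalMultilinearSeries.ofScalars_series_injective ℂ ℂ hpq
  apply lp.ext
  funext n
  have := congrFun hcoef n
  field_simp [beta_ne hβ n] at this
  exact this

private lemma analytic_itd {f : ℂ → ℂ} {s : Set ℂ} (hf : AnalyticOnNhd ℂ f s) (m : ℕ) :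
    AnalyticOnNhd ℂ (iteratedDeriv m f) s := by
  induction m with
  | zero => rwa [iteratedDeriv_zero]
  | succ m ih => rw [iteratedDeriv_succ]; exact ih.deriv

/-- Chain rule for iterated derivatives of `z ↦ f (c z)` for `f` analytic on the disc. -/
private lemma itd_comp {f : ℂ → ℂ} (hf : AnalyticOnNhd ℂ f (ball (0:ℂ) 1)) (c : ℂ) (m : ℕ) :
    ∀ p : ℂ, c * p ∈ ball (0:ℂ) 1 →
      iteratedDeriv m (fun z => f (c * z)) p = c ^ m * iteratedDeriv m f (c * p) := by
  induction m with
  | zero => intro p _; simp [iteratedDeriv_zero]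
  | succ m ih =>
    intro p hp
    have hopen : IsOpen {q : ℂ | c * q ∈ ball (0:ℂ) 1} :=
      isOpen_ball.preimage (continuous_const.mul continuous_id)
    have hmem : {q : ℂ | c * q ∈ ball (0:ℂ) 1} ∈ nhds p := hopen.mem_nhds hp
    have hev : iteratedDeriv m (fun z => f (c * z))
        =ᶠ[nhds p] fun q => c ^ m * iteratedDeriv m f (c * q) :=
      Filter.eventuallyEq_of_mem hmem fun q hq => ih q hq
    rw [iteratedDeriv_succ, hev.deriv_eq, deriv_const_mul_field]
    have hd : DifferentiableAt ℂ (iteratedDeriv m f) (c * p) :=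
      ((analytic_itd hf m) _ hp).differentiableAt
    have h1 : HasDerivAt (fun q : ℂ => c * q) c p := by
      simpa using (hasDerivAt_id p).const_mul c
    have h2 : HasDerivAt (iteratedDeriv m f) (deriv (iteratedDeriv m f) (c * p)) (c * p) :=
      hd.hasDerivAt
    have h3 := (h2.comp p h1)
    have h4 : deriv (fun q => iteratedDeriv m f (c * q)) p
        = deriv (iteratedDeriv m f) (c * p) * c := by
      have := h3.deriv
      rw [← this]
      congr 1
    rw [h4, iteratedDeriv_succ]
    ring

/-- The reproducing property: `⟪K_γ, x⟫ = (Fval x)(γ)`. -/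
private lemma inner_ker_eq {β : ℕ → ℝ} (γ : ℂ) (k x : Hs)
    (hk : ∀ n, (k : ℕ → ℂ) n = kerSeq β γ n) : ⟪k, x⟫_ℂ = Fval β (⇑x) γ := by
  rw [lp.inner_eq_tsum]
  refine tsum_congr fun n => ?_
  rw [RCLike.inner_apply, hk n]
  simp only [kerSeq, Fval, map_div₀, map_pow, Complex.conj_conj, Complex.conj_ofReal]
  ring

/-- Interaction of the conjugation `J` with kernel inner products. -/
private lemma inner_J {β : ℕ → ℝ} (w γ : ℂ) (k k' x j : Hs)
    (hk : ∀ n, (k : ℕ → ℂ) n = kerSeq β γ n)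
    (hk' : ∀ n, (k' : ℕ → ℂ) n = kerSeq β (w * conj γ) n)
    (hj : ∀ n, (j : ℕ → ℂ) n = Jseq w (⇑x) n) : ⟪k, j⟫_ℂ = conj ⟪k', x⟫_ℂ := by
  rw [lp.inner_eq_tsum, lp.inner_eq_tsum, starRingEnd_apply, tsum_star]
  refine tsum_congr fun n => ?_
  rw [RCLike.inner_apply, RCLike.inner_apply, hk n, hk' n, hj n, ← starRingEnd_apply]
  simp only [kerSeq, Jseq, map_mul, map_pow, map_div₀, Complex.conj_conj, Complex.conj_ofReal]
  ring

/-- `Fval` of a kernel is a dilation of the universal function `F`. -/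
private lemma fval_ker {β : ℕ → ℝ} (α' z : ℂ) :
    Fval β (kerSeq β α') z = Fval β (fun n => 1 / (β n : ℂ)) (conj α' * z) := by
  simp only [Fval, kerSeq]
  refine tsum_congr fun n => ?_
  rw [mul_pow]
  ring

/-- `φ(z) = a₁ z`, `ψ(z) = (a₂/m!) z^m` give a `J_w`-symmetric operator. -/
theorem stmt10 (β : ℕ → ℝ) (hβ : WeightOK β) (m : ℕ) (hm : 1 ≤ m)
    (w a₁ a₂ : ℂ) (hw : ‖w‖ = 1) (ha₁ : a₁ ∈ ball (0:ℂ) 1)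
    (ψ φ : ℂ → ℂ) (hφdef : ∀ z, φ z = a₁ * z)
    (hψdef : ∀ z, ψ z = a₂ / (m.factorial : ℂ) * z ^ m)
    (T : Hs →L[ℂ] Hs) (hT : IsGWCO β m ψ φ T)
    (J : Hs → Hs) (hJ : ∀ (x : Hs) (n : ℕ), (J x : ℕ → ℂ) n = Jseq w (x : ℕ → ℂ) n)
    (K : ℂ → Hs) (hK : ∀ α n, (K α : ℕ → ℂ) n = kerSeq β α n) :
    ∀ α ∈ ball (0:ℂ) 1,
      J (ContinuousLinearMap.adjoint T (K α)) = T (J (K α)) := by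
  intro α hα
  set F : ℂ → ℂ := Fval β (fun n => 1 / (β n : ℂ)) with hF
  -- `F` is analytic on the unit disc
  have hradF : 1 ≤ (pser β (fun n => 1 / (β n : ℂ))).radius := by
    apply radius_ge_one
    intro t ht0 ht1
    refine ⟨1, zero_le_one, ?_⟩
    set s := Real.sqrt t with hs
    have hss : s * s = t := Real.mul_self_sqrt ht0.le
    have hs0 : 0 < s := Real.sqrt_pos.2 ht0
    have hs1 : s < 1 := by nlinarith
    filter_upwards [beta_eventually hβ hs0 hs1] with n hn
    have hb : 0 < β n := lt_of_lt_of_le (by positivity) hn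
    have h1 : ‖(1 / (β n : ℂ)) / (β n : ℂ)‖ = 1 / (β n * β n) := by
      simp [Complex.norm_real, Real.norm_eq_abs, abs_of_pos hb, div_div, div_eq_mul_inv]
    rw [h1]
    have ht : t ^ n = s ^ n * s ^ n := by rw [← mul_pow, hss]
    refine div_le_div₀ zero_le_one le_rfl (by positivity) ?_
    rw [ht]
    exact mul_le_mul hn hn (by positivity) hb.le
  have hFfp := hasfp (β := β) (fun n => 1 / (β n : ℂ)) hradF
  have hFan : AnalyticOnNhd ℂ F (ball (0:ℂ) 1) := by
    intro z hz
    have hz' : z ∈ Metric.eball (0:ℂ) 1 := by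
      rw [Metric.mem_eball, edist_dist, ← ENNReal.ofReal_one]
      exact (ENNReal.ofReal_lt_ofReal_iff one_pos).2 (Metric.mem_ball.1 hz)
    exact hFfp.analyticAt_of_mem hz'
  have hKfun : ∀ α' : ℂ, ((K α' : Hs) : ℕ → ℂ) = kerSeq β α' := fun α' => funext (hK α')
  have hJK : J (K α) = K (w * conj α) := by
    apply lp.ext; funext n
    rw [hJ (K α) n, hK (w * conj α) n]
    simp only [Jseq, hK α, kerSeq, map_div₀, map_pow, map_mul, Complex.conj_conj,
      Complex.conj_ofReal, mul_pow]
    ring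
  have hball : ∀ {u v : ℂ}, u ∈ ball (0:ℂ) 1 → v ∈ ball (0:ℂ) 1 → u * v ∈ ball (0:ℂ) 1 := by
    intro u v hu hv
    rw [mem_ball_zero_iff] at *
    rw [norm_mul]
    nlinarith [norm_nonneg u, norm_nonneg v]
  have hwc : ∀ {γ' : ℂ}, γ' ∈ ball (0:ℂ) 1 → conj (w * conj γ') ∈ ball (0:ℂ) 1 := by
    intro γ' h
    rw [mem_ball_zero_iff] at *
    calc ‖conj (w * conj γ')‖ = ‖w‖ * ‖γ'‖ := by
          rw [RCLike.norm_conj, norm_mul, RCLike.norm_conj]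
      _ = ‖γ'‖ := by rw [show ‖w‖ = 1 from hw, one_mul]
      _ < 1 := h
  -- symmetry of the reduced expression
  have hsym : ∀ γ ∈ ball (0:ℂ) 1,
      ψ α * iteratedDeriv m (Fval β ((K (w * conj γ) : Hs) : ℕ → ℂ)) (φ α)
        = ψ γ * iteratedDeriv m (Fval β ((K (w * conj α) : Hs) : ℕ → ℂ)) (φ γ) := by
    intro γ hγ
    rw [hKfun, hKfun, hφdef, hφdef, hψdef, hψdef]
    have hFK : ∀ α' : ℂ, Fval β (kerSeq β α') = fun z => F (conj α' * z) := by
      intro α'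
      funext z
      rw [hF]
      exact fval_ker α' z
    rw [hFK, hFK]
    rw [itd_comp hFan (conj (w * conj γ)) m (a₁ * α) (hball (hwc hγ) (hball ha₁ hα)),
        itd_comp hFan (conj (w * conj α)) m (a₁ * γ) (hball (hwc hα) (hball ha₁ hγ))]
    have harg : conj (w * conj γ) * (a₁ * α) = conj (w * conj α) * (a₁ * γ) := by
      simp only [map_mul, Complex.conj_conj]; ring
    rw [harg]
    have e1 : conj (w * conj γ) = conj w * γ := by simp [map_mul]
    have e2 : conj (w * conj α) = conj w * α := by simp [map_mul]
    rw [e1, e2]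
    ring
  -- main computation via the reproducing kernels
  apply fval_inj hβ
  intro γ hγ
  have lhs_eq : Fval β ((J (ContinuousLinearMap.adjoint T (K α)) : Hs) : ℕ → ℂ) γ
      = ψ α * iteratedDeriv m (Fval β ((K (w * conj γ) : Hs) : ℕ → ℂ)) (φ α) := by
    rw [← inner_ker_eq γ (K γ) (J (ContinuousLinearMap.adjoint T (K α))) (hK γ),
      inner_J w γ (K γ) (K (w * conj γ)) (ContinuousLinearMap.adjoint T (K α))
        (J (ContinuousLinearMap.adjoint T (K α))) (hK γ) (hK _) (hJ _),
      ContinuousLinearMap.adjoint_inner_right, inner_conj_symm,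
      inner_ker_eq α (K α) (T (K (w * conj γ))) (hK α)]
    exact hT (K (w * conj γ)) α hα
  have rhs_eq : Fval β ((T (J (K α)) : Hs) : ℕ → ℂ) γ
      = ψ γ * iteratedDeriv m (Fval β ((K (w * conj α) : Hs) : ℕ → ℂ)) (φ γ) := by
    rw [hJK]
    exact hT (K (w * conj α)) γ hγ
  rw [lhs_eq, rhs_eq]
  exact hsym γ hγ
end
end

section
/- Let m ≥ 1, a₀ ∈ 𝔻 nonzero, |w|=1, and define φ(z) = a₀ (constant) and ψ(z) = (β(m)² a₂/(m!)²) K^{[m]}_{w·conj(a₀)}(z) for some a₂ ∈ ℂ. If D_{m,ψ,φ} is bounded on H²(β), then it is J_w-symmetric. -/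
open Complex Metric
open scoped InnerProductSpace ComplexConjugate

noncomputable section

namespace Stmt11Aux

/-- The sum of a power series with coefficients `c`. -/
def psum (c : ℕ → ℂ) (z : ℂ) : ℂ := ∑' n : ℕ, c n * z ^ n

/-- Coefficients with subgeometric growth. -/
def Good (c : ℕ → ℂ) : Prop :=
  ∀ r : ℝ, 0 ≤ r → r < 1 → ∃ C : ℝ, 0 ≤ C ∧ ∀ n, ‖c n‖ * r ^ n ≤ C

lemma bdd_pow_mul_geom (k : ℕ) {q : ℝ} (hq0 : 0 ≤ q) (hq1 : q < 1) :
    ∃ B : ℝ, 0 ≤ B ∧ ∀ n : ℕ, ((n : ℝ) + 1) ^ k * q ^ n ≤ B := by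
  have hs : Summable (fun n : ℕ => (n : ℝ) ^ k * q ^ n) :=
    summable_pow_mul_geometric_of_norm_lt_one k
      (by rwa [Real.norm_eq_abs, _root_.abs_of_nonneg hq0])
  have hnn : ∀ n : ℕ, 0 ≤ (n : ℝ) ^ k * q ^ n := fun n =>
    mul_nonneg (pow_nonneg (Nat.cast_nonneg n) _) (pow_nonneg hq0 _)
  have htn : 0 ≤ ∑' n : ℕ, (n : ℝ) ^ k * q ^ n := tsum_nonneg hnn
  refine ⟨max 1 (2 ^ k * ∑' n : ℕ, (n : ℝ) ^ k * q ^ n),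
    le_trans zero_le_one (le_max_left _ _), fun n => ?_⟩
  rcases Nat.eq_zero_or_pos n with h0 | h1
  · subst h0
    simp only [Nat.cast_zero, zero_add, one_pow, pow_zero, mul_one]
    exact le_max_left _ _
  · have hn1 : (1 : ℝ) ≤ (n : ℝ) := by exact_mod_cast h1
    have h2 : ((n : ℝ) + 1) ^ k ≤ 2 ^ k * (n : ℝ) ^ k := by
      rw [← mul_pow]
      exact pow_le_pow_left₀ (by linarith) (by linarith) k
    have h3 : (n : ℝ) ^ k * q ^ n ≤ ∑' n : ℕ, (n : ℝ) ^ k * q ^ n :=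
      Summable.le_tsum hs n fun j _ => hnn j
    calc ((n : ℝ) + 1) ^ k * q ^ n ≤ 2 ^ k * (n : ℝ) ^ k * q ^ n :=
          mul_le_mul_of_nonneg_right h2 (pow_nonneg hq0 _)
      _ = 2 ^ k * ((n : ℝ) ^ k * q ^ n) := by ring
      _ ≤ 2 ^ k * ∑' n : ℕ, (n : ℝ) ^ k * q ^ n := by
          exact mul_le_mul_of_nonneg_left h3 (by positivity)
      _ ≤ _ := le_max_right _ _

lemma weight_bound {β : ℕ → ℝ} (hβ : WeightOK β) {r : ℝ} (hr0 : 0 ≤ r) (hr1 : r < 1) :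
    ∃ C : ℝ, 0 ≤ C ∧ ∀ n, r ^ n ≤ C * β n := by
  obtain ⟨hβpos, hβ0, hβlim⟩ := hβ
  obtain ⟨s, hs0, hsr, hs1⟩ : ∃ s : ℝ, 0 < s ∧ r < s ∧ s < 1 :=
    ⟨(1 + r) / 2, by linarith, by linarith, by linarith⟩
  have hbdd : Filter.atTop.IsBoundedUnder (· ≥ ·) (fun n : ℕ => (β n) ^ ((1:ℝ)/(n:ℝ))) :=
    Filter.isBoundedUnder_of ⟨0, fun n => Real.rpow_nonneg (hβpos n).le _⟩
  have hev : ∀ᶠ n in Filter.atTop, s < (β n) ^ ((1:ℝ)/(n:ℝ)) :=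
    Filter.eventually_lt_of_lt_liminf (lt_of_lt_of_le hs1 hβlim) hbdd
  obtain ⟨N, hN⟩ := Filter.eventually_atTop.mp hev
  set N' : ℕ := max N 1 with hN'
  have hne : (Finset.range N').Nonempty := Finset.nonempty_range_iff.mpr (by omega)
  set C : ℝ := max 1 ((Finset.range N').sup' hne fun n => r ^ n / β n) with hC
  have hC1 : (1:ℝ) ≤ C := le_max_left _ _
  refine ⟨C, le_trans zero_le_one hC1, fun n => ?_⟩
  rcases lt_or_ge n N' with h | h
  · have hle : r ^ n / β n ≤ C :=
      le_trans (Finset.le_sup' (fun n => r ^ n / β n) (Finset.mem_range.mpr h))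
        (le_max_right _ _)
    have := mul_le_mul_of_nonneg_right hle (hβpos n).le
    rwa [div_mul_cancel₀ _ (hβpos n).ne'] at this
  · have hn1 : n ≠ 0 := by omega
    have hsn : s ^ n ≤ β n := by
      have h1 : s < (β n) ^ ((1:ℝ)/(n:ℝ)) := hN n (le_trans (le_max_left _ _) h)
      have h2 : s ^ n ≤ ((β n) ^ ((1:ℝ)/(n:ℝ))) ^ n :=
        pow_le_pow_left₀ hs0.le h1.le n
      rwa [one_div, Real.rpow_inv_natCast_pow (hβpos n).le hn1] at h2
    calc r ^ n ≤ s ^ n := pow_le_pow_left₀ hr0 hsr.le n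
      _ ≤ β n := hsn
      _ = 1 * β n := (one_mul _).symm
      _ ≤ C * β n := mul_le_mul_of_nonneg_right hC1 (hβpos n).le

lemma good_of_bounded {β : ℕ → ℝ} (hβ : WeightOK β) {x : ℕ → ℂ} {M : ℝ}
    (hM : 0 ≤ M) (hx : ∀ n, ‖x n‖ ≤ M) : Good (fun n => x n / (β n : ℂ)) := by
  intro r hr0 hr1
  obtain ⟨C, hC0, hC⟩ := weight_bound hβ hr0 hr1
  refine ⟨M * C, by positivity, fun n => ?_⟩
  have hβn := hβ.1 n
  have hnb : ‖((β n : ℝ) : ℂ)‖ = β n := by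
    rw [Complex.norm_real, Real.norm_eq_abs, abs_of_pos hβn]
  rw [norm_div, hnb, div_mul_eq_mul_div, div_le_iff₀ hβn]
  calc ‖x n‖ * r ^ n ≤ M * r ^ n :=
        mul_le_mul_of_nonneg_right (hx n) (pow_nonneg hr0 n)
    _ ≤ M * (C * β n) := mul_le_mul_of_nonneg_left (hC n) hM
    _ = M * C * β n := by ring

lemma norm_kerDSeq_le {β : ℕ → ℝ} (hβ : ∀ n, 0 < β n) (m : ℕ) {γ : ℂ} (hγ : ‖γ‖ ≤ 1) (n : ℕ) :
    ‖kerDSeq β m γ n‖ ≤ ((n : ℝ) + 1) ^ m / β n := by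
  unfold kerDSeq
  split_ifs with h
  · rw [norm_div, norm_mul, norm_div, Complex.norm_real, Real.norm_eq_abs,
      abs_of_pos (hβ n), norm_pow, RCLike.norm_conj]
    have h1 : ‖γ‖ ^ (n - m) ≤ 1 := pow_le_one₀ (norm_nonneg _) hγ
    have h2 : ‖(n.factorial : ℂ)‖ / ‖((n - m).factorial : ℂ)‖ ≤ ((n : ℝ) + 1) ^ m := by
      rw [Complex.norm_natCast, Complex.norm_natCast]
      rw [div_le_iff₀ (by positivity)]
      have h3 : (n.factorial : ℝ) = (n.descFactorial m : ℝ) * ((n - m).factorial : ℝ) := by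
        rw [← Nat.cast_mul, mul_comm, Nat.factorial_mul_descFactorial h]
      rw [h3]
      apply mul_le_mul_of_nonneg_right _ (by positivity)
      calc (n.descFactorial m : ℝ) ≤ ((n : ℕ) ^ m : ℕ) := by
            exact_mod_cast Nat.descFactorial_le_pow n m
        _ = (n : ℝ) ^ m := by push_cast; ring
        _ ≤ ((n : ℝ) + 1) ^ m := pow_le_pow_left₀ (Nat.cast_nonneg n) (by linarith) m
    rw [div_le_div_iff_of_pos_right (hβ n)]
    calc ‖(n.factorial : ℂ)‖ / ‖((n - m).factorial : ℂ)‖ * ‖γ‖ ^ (n - m)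
        ≤ ‖(n.factorial : ℂ)‖ / ‖((n - m).factorial : ℂ)‖ * 1 :=
          mul_le_mul_of_nonneg_left h1 (by positivity)
      _ = ‖(n.factorial : ℂ)‖ / ‖((n - m).factorial : ℂ)‖ := mul_one _
      _ ≤ ((n : ℝ) + 1) ^ m := h2
  · simp only [norm_zero]
    exact div_nonneg (by positivity) (hβ n).le

lemma good_kerD {β : ℕ → ℝ} (hβ : WeightOK β) (m : ℕ) {γ : ℂ} (hγ : ‖γ‖ ≤ 1) :
    Good (fun n => kerDSeq β m γ n / (β n : ℂ)) := by
  intro r hr0 hr1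
  obtain ⟨t, ht0, ht1, htr2⟩ : ∃ t : ℝ, 0 < t ∧ t < 1 ∧ r < t ^ 2 :=
    ⟨(1 + r) / 2, by linarith, by linarith, by nlinarith⟩
  obtain ⟨C, hC0, hC⟩ := weight_bound hβ ht0.le ht1
  have hq1 : r / t ^ 2 < 1 := by
    rw [div_lt_one (by positivity)]
    exact htr2
  obtain ⟨B, hB0, hB⟩ := bdd_pow_mul_geom m (by positivity) hq1
  refine ⟨B * C ^ 2, by positivity, fun n => ?_⟩
  have hβn := hβ.1 n
  have h1 : ‖kerDSeq β m γ n / (β n : ℂ)‖ ≤ ((n : ℝ) + 1) ^ m / (β n) ^ 2 := by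
    rw [norm_div, Complex.norm_real, Real.norm_eq_abs, abs_of_pos hβn]
    calc ‖kerDSeq β m γ n‖ / β n ≤ (((n : ℝ) + 1) ^ m / β n) / β n := by
          gcongr
          exact norm_kerDSeq_le hβ.1 m hγ n
      _ = ((n : ℝ) + 1) ^ m / (β n) ^ 2 := by rw [div_div, sq]
  have h2 : ((n : ℝ) + 1) ^ m * r ^ n ≤ B * C ^ 2 * (β n) ^ 2 := by
    have h3 := hB n
    have h4 : ((n : ℝ) + 1) ^ m * r ^ n ≤ B * (t ^ 2) ^ n := by
      have := mul_le_mul_of_nonneg_right h3 (pow_nonneg (by positivity : (0:ℝ) ≤ t ^ 2) n)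
      rwa [mul_assoc, ← mul_pow, div_mul_cancel₀ _ (by positivity : (t:ℝ) ^ 2 ≠ 0)] at this
    have h5 : (t ^ 2) ^ n ≤ (C * β n) ^ 2 := by
      rw [← pow_mul, mul_comm 2 n, pow_mul]
      exact pow_le_pow_left₀ (pow_nonneg ht0.le n) (hC n) 2
    calc ((n : ℝ) + 1) ^ m * r ^ n ≤ B * (t ^ 2) ^ n := h4
      _ ≤ B * (C * β n) ^ 2 := mul_le_mul_of_nonneg_left h5 hB0
      _ = B * C ^ 2 * (β n) ^ 2 := by ring
  calc ‖kerDSeq β m γ n / (β n : ℂ)‖ * r ^ n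
      ≤ (((n : ℝ) + 1) ^ m / (β n) ^ 2) * r ^ n :=
        mul_le_mul_of_nonneg_right h1 (pow_nonneg hr0 n)
    _ = (((n : ℝ) + 1) ^ m * r ^ n) / (β n) ^ 2 := by ring
    _ ≤ (B * C ^ 2 * (β n) ^ 2) / (β n) ^ 2 := by gcongr
    _ = B * C ^ 2 := by field_simp

lemma Good.const_mul {c : ℕ → ℂ} (hc : Good c) (a : ℂ) : Good (fun n => a * c n) := by
  intro r hr0 hr1
  obtain ⟨C, hC0, hC⟩ := hc r hr0 hr1
  refine ⟨‖a‖ * C, by positivity, fun n => ?_⟩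
  rw [norm_mul, mul_assoc]
  exact mul_le_mul_of_nonneg_left (hC n) (norm_nonneg a)

lemma Good.norm_le {c : ℕ → ℂ} (hc : Good c) {t : ℝ} (ht0 : 0 < t) (ht1 : t < 1) :
    ∃ C : ℝ, 0 ≤ C ∧ ∀ n, ‖c n‖ ≤ C / t ^ n := by
  obtain ⟨C, hC0, hC⟩ := hc t ht0.le ht1
  exact ⟨C, hC0, fun n => (le_div_iff₀ (pow_pos ht0 n)).2 (hC n)⟩

lemma Good.summable {c : ℕ → ℂ} (hc : Good c) {z : ℂ} (hz : ‖z‖ < 1) :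
    Summable (fun n => c n * z ^ n) := by
  have h0 : 0 ≤ ‖z‖ := norm_nonneg z
  obtain ⟨t, ht0, htz, ht1⟩ : ∃ t : ℝ, 0 < t ∧ ‖z‖ < t ∧ t < 1 :=
    ⟨(‖z‖ + 1) / 2, by linarith, by linarith, by linarith⟩
  obtain ⟨C, hC0, hC⟩ := hc.norm_le ht0 ht1
  apply Summable.of_norm_bounded (g := fun n => C * (‖z‖ / t) ^ n)
  · exact (summable_geometric_of_lt_one (by positivity) (by rwa [div_lt_one ht0])).mul_left C
  · intro n
    rw [norm_mul, norm_pow]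
    calc ‖c n‖ * ‖z‖ ^ n ≤ (C / t ^ n) * ‖z‖ ^ n :=
          mul_le_mul_of_nonneg_right (hC n) (pow_nonneg h0 n)
      _ = C * (‖z‖ / t) ^ n := by rw [div_pow, div_mul_eq_mul_div, mul_div_assoc]

/-- The coefficientwise derivative. -/
def shift (c : ℕ → ℂ) : ℕ → ℂ := fun n => ((n : ℂ) + 1) * c (n + 1)

lemma good_shift {c : ℕ → ℂ} (hc : Good c) : Good (Stmt11Aux.shift c) := by
  intro r hr0 hr1
  obtain ⟨t, ht0, htr, ht1⟩ : ∃ t : ℝ, 0 < t ∧ r < t ∧ t < 1 :=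
    ⟨(1 + r) / 2, by linarith, by linarith, by linarith⟩
  obtain ⟨C, hC0, hC⟩ := hc.norm_le ht0 ht1
  obtain ⟨B, hB0, hB⟩ := bdd_pow_mul_geom 1 (by positivity : (0:ℝ) ≤ r / t)
    (by rw [div_lt_one ht0]; exact htr)
  refine ⟨C / t * B, by positivity, fun n => ?_⟩
  have h1 : ‖Stmt11Aux.shift c n‖ = ((n : ℝ) + 1) * ‖c (n + 1)‖ := by
    have h2 : Stmt11Aux.shift c n = ((n + 1 : ℕ) : ℂ) * c (n + 1) := by
      simp only [Stmt11Aux.shift]; push_cast; ring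
    rw [h2, norm_mul, Complex.norm_natCast]; push_cast; ring
  rw [h1]
  calc ((n : ℝ) + 1) * ‖c (n + 1)‖ * r ^ n
      ≤ ((n : ℝ) + 1) * (C / t ^ (n + 1)) * r ^ n := by
        apply mul_le_mul_of_nonneg_right _ (pow_nonneg hr0 n)
        exact mul_le_mul_of_nonneg_left (hC (n + 1)) (by positivity)
    _ = C / t * (((n : ℝ) + 1) ^ 1 * (r / t) ^ n) := by
        have ht0' : t ≠ 0 := ne_of_gt ht0
        rw [div_pow, pow_succ, pow_one]
        field_simp
    _ ≤ C / t * B := mul_le_mul_of_nonneg_left (hB n) (by positivity)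

lemma Good.shift_iter {c : ℕ → ℂ} (hc : Good c) (j : ℕ) : Good (shift^[j] c) := by
  induction j with
  | zero => exact hc
  | succ j ih => rw [Function.iterate_succ_apply']; exact good_shift ih

lemma shift_iter_apply (c : ℕ → ℂ) (j n : ℕ) :
    shift^[j] c n = (((n + j).descFactorial j : ℕ) : ℂ) * c (n + j) := by
  induction j generalizing c with
  | zero => simp
  | succ j ih =>
    rw [Function.iterate_succ_apply, ih (shift c)]
    rw [show shift c (n + j) = ((n + j : ℕ) + 1 : ℂ) * c (n + j + 1) by rw [shift]]
    rw [show n + (j + 1) = n + j + 1 by ring, Nat.succ_descFactorial_succ]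
    push_cast
    ring

lemma Good.hasDerivAt {c : ℕ → ℂ} (hc : Good c) {z : ℂ} (hz : ‖z‖ < 1) :
    HasDerivAt (psum c) (psum (shift c) z) z := by
  have h0 : 0 ≤ ‖z‖ := norm_nonneg z
  obtain ⟨R, hzR, hR1⟩ : ∃ R : ℝ, ‖z‖ < R ∧ R < 1 :=
    ⟨(‖z‖ + 1) / 2, by linarith, by linarith⟩
  have hR0 : 0 < R := lt_of_le_of_lt h0 hzR
  obtain ⟨t, ht0, htR, ht1⟩ : ∃ t : ℝ, 0 < t ∧ R < t ∧ t < 1 :=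
    ⟨(R + 1) / 2, by linarith, by linarith, by linarith⟩
  obtain ⟨C, hC0, hC⟩ := hc.norm_le ht0 ht1
  have hq0 : 0 ≤ R / t := by positivity
  have hq1 : R / t < 1 := by rw [div_lt_one ht0]; exact htR
  have hq0' : 0 ≤ R / t := by positivity
  set u : ℕ → ℝ := fun n => C / t * ((n : ℝ) * (R / t) ^ (n - 1)) with hu
  have husum : Summable u := by
    apply Summable.mul_left
    rw [← summable_nat_add_iff 1]
    apply Summable.congr ((summable_pow_mul_geometric_of_norm_lt_one 1
        (by rwa [Real.norm_eq_abs, _root_.abs_of_nonneg hq0] : ‖R / t‖ < 1)).add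
      (summable_geometric_of_lt_one hq0 hq1))
    intro n
    simp only [pow_one, Nat.add_sub_cancel]
    push_cast
    ring
  have key := hasDerivAt_tsum_of_isPreconnected (g := fun n y => c n * y ^ n)
    (g' := fun n y => c n * ((n : ℂ) * y ^ (n - 1))) (y₀ := 0) husum
    (isOpen_ball (x := (0:ℂ)) (ε := R)) (convex_ball (0:ℂ) R).isPreconnected
    (fun n y _ => (hasDerivAt_pow n y).const_mul (c n))
    (fun n y hy => ?_) (mem_ball_zero_iff.mpr (by simpa using hR0)) ?_ (mem_ball_zero_iff.mpr hzR)
  · have heq : (∑' n, c n * ((n : ℂ) * z ^ (n - 1))) = psum (shift c) z := by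
      rw [psum]
      rw [← Function.Injective.tsum_eq (f := fun n => c n * ((n : ℂ) * z ^ (n - 1)))
        (add_left_injective 1) ?_]
      · apply tsum_congr
        intro k
        simp only [Nat.add_sub_cancel, shift]
        push_cast
        ring
      · intro x hx
        rcases Nat.eq_zero_or_pos x with h | h
        · exfalso
          apply hx
          subst h
          simp
        · exact ⟨x - 1, by simpa using Nat.sub_add_cancel h⟩
    rw [← heq]
    exact key
  · rw [mem_ball_zero_iff] at hy
    rcases Nat.eq_zero_or_pos n with h | h
    · subst h; simp [hu]
    · have hn1 : (1 : ℝ) ≤ (n : ℝ) := by exact_mod_cast h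
      rw [norm_mul, norm_mul, norm_pow, Complex.norm_natCast]
      calc ‖c n‖ * ((n : ℝ) * ‖y‖ ^ (n - 1))
          ≤ (C / t ^ n) * ((n : ℝ) * R ^ (n - 1)) := by
            apply mul_le_mul (hC n) ?_ (by positivity) (by positivity)
            exact mul_le_mul_of_nonneg_left
              (pow_le_pow_left₀ (norm_nonneg y) hy.le _) (by linarith)
        _ = u n := by
            obtain ⟨k, rfl⟩ : ∃ k, n = k + 1 := ⟨n - 1, by omega⟩
            have ht0' : t ≠ 0 := ne_of_gt ht0
            rw [hu]
            simp only [Nat.add_sub_cancel]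
            rw [div_pow, pow_succ]
            push_cast
            ring
  · apply summable_of_ne_finset_zero (s := {0})
    intro n hn
    simp only [Finset.mem_singleton] at hn
    simp [zero_pow hn]

lemma Good.iteratedDeriv_psum {c : ℕ → ℂ} (hc : Good c) (j : ℕ) :
    ∀ z : ℂ, ‖z‖ < 1 → iteratedDeriv j (psum c) z = psum (shift^[j] c) z := by
  induction j with
  | zero => intro z _; simp
  | succ j ih =>
    intro z hz
    rw [iteratedDeriv_succ]
    have hev : iteratedDeriv j (psum c) =ᶠ[nhds z] psum (shift^[j] c) := by
      apply Filter.eventually_of_mem (isOpen_ball.mem_nhds (mem_ball_zero_iff.mpr hz))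
      intro y hy
      exact ih y (mem_ball_zero_iff.mp hy)
    rw [hev.deriv_eq, Function.iterate_succ_apply']
    exact ((hc.shift_iter j).hasDerivAt hz).deriv

lemma Good.hasFPowerSeriesOnBall {c : ℕ → ℂ} (hc : Good c) :
    HasFPowerSeriesOnBall (psum c) (FormalMultilinearSeries.ofScalars ℂ c) 0 1 := by
  have hrad : 1 ≤ (FormalMultilinearSeries.ofScalars ℂ c).radius := by
    apply ENNReal.le_of_forall_nnreal_lt
    intro r hr
    have hr1 : (r : ℝ) < 1 := by exact_mod_cast hr
    obtain ⟨C, hC0, hC⟩ := hc r r.coe_nonneg hr1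
    exact FormalMultilinearSeries.le_radius_of_bound _ C fun n => by
      rw [FormalMultilinearSeries.ofScalars_norm]; exact hC n
  have hsum : (FormalMultilinearSeries.ofScalars ℂ c).sum = psum c := by
    funext z
    rw [show (FormalMultilinearSeries.ofScalars ℂ c).sum z
        = FormalMultilinearSeries.ofScalarsSum c z from rfl,
      FormalMultilinearSeries.ofScalars_sum_eq, psum]
    exact tsum_congr fun n => by rw [smul_eq_mul]
  have h0 : (0 : ENNReal) < (FormalMultilinearSeries.ofScalars ℂ c).radius :=
    lt_of_lt_of_le one_pos hrad
  have h := (FormalMultilinearSeries.ofScalars ℂ c).hasFPowerSeriesOnBall h0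
  rw [hsum] at h
  exact h.mono one_pos hrad

lemma Good.psum_coeff_eq {c c' : ℕ → ℂ} (hc : Good c) (hc' : Good c')
    (h : ∀ z : ℂ, ‖z‖ < 1 → psum c z = psum c' z) : c = c' := by
  have h1 := hc.hasFPowerSeriesOnBall.hasFPowerSeriesAt
  have h2 := hc'.hasFPowerSeriesOnBall.hasFPowerSeriesAt
  have hev : ∀ᶠ z in nhds (0 : ℂ), psum c z = psum c' z := by
    apply Filter.eventually_of_mem (isOpen_ball.mem_nhds
      (mem_ball_zero_iff.mpr (by norm_num : ‖(0:ℂ)‖ < 1)))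
    intro y hy
    exact h y (mem_ball_zero_iff.mp hy)
  have := h1.eq_formalMultilinearSeries_of_eventually h2 hev
  exact (FormalMultilinearSeries.ofScalars_series_injective ℂ ℂ) this

end Stmt11Aux

open Stmt11Aux

/-- constant `φ = a₀ ≠ 0` with `ψ = (β(m)² a₂/(m!)²) K^{[m]}_{w conj(a₀)}`
gives a `J_w`-symmetric operator. -/
theorem stmt11 (β : ℕ → ℝ) (hβ : WeightOK β) (m : ℕ) (hm : 1 ≤ m)
    (w a₀ a₂ : ℂ) (hw : ‖w‖ = 1) (ha₀ : a₀ ∈ ball (0:ℂ) 1) (ha₀0 : a₀ ≠ 0)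
    (ψ φ : ℂ → ℂ) (hφdef : ∀ z, φ z = a₀)
    (hψdef : ∀ z ∈ ball (0:ℂ) 1,
      ψ z = (β m : ℂ) ^ 2 * a₂ / ((m.factorial : ℂ)) ^ 2 *
        Fval β (kerDSeq β m (w * conj a₀)) z)
    (T : Hs →L[ℂ] Hs) (hT : IsGWCO β m ψ φ T)
    (J : Hs → Hs) (hJ : ∀ (x : Hs) (n : ℕ), (J x : ℕ → ℂ) n = Jseq w (x : ℕ → ℂ) n)
    (K : ℂ → Hs) (hK : ∀ α n, (K α : ℕ → ℂ) n = kerSeq β α n) :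
    ∀ α ∈ ball (0:ℂ) 1,
      J (ContinuousLinearMap.adjoint T (K α)) = T (J (K α)) := by
  intro α hα
  have hα' : ‖α‖ < 1 := mem_ball_zero_iff.mp hα
  have ha₀' : ‖a₀‖ < 1 := mem_ball_zero_iff.mp ha₀
  have hβpos := hβ.1
  have hβne : ∀ n, ((β n : ℝ) : ℂ) ≠ 0 := by
    intro n
    simpa using (hβpos n).ne'
  have hwn : ‖w‖ = 1 := hw
  have habs : ∀ z : ℂ, ‖w * conj z‖ = ‖z‖ := by
    intro z
    rw [norm_mul, RCLike.norm_conj, hwn, one_mul]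
  have hγ : ‖w * conj α‖ < 1 := by rw [habs]; exact hα'
  have hγ₀ : ‖w * conj a₀‖ < 1 := by rw [habs]; exact ha₀'
  have hfact : ∀ {n : ℕ}, m ≤ n →
      ((n.factorial : ℂ) / ((n - m).factorial : ℂ)) = ((n.descFactorial m : ℕ) : ℂ) := by
    intro n h
    have h2 : n.descFactorial m * (n - m).factorial = n.factorial := by
      rw [mul_comm]; exact Nat.factorial_mul_descFactorial h
    rw [div_eq_iff (Nat.cast_ne_zero.mpr (Nat.factorial_ne_zero _)), ← Nat.cast_mul, h2]
  have hFval : ∀ x : ℕ → ℂ, Fval β x = psum (fun n => x n / (β n : ℂ)) := fun _ => rfl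
  have hGoodx : ∀ x : Hs, Good (fun n => (x : ℕ → ℂ) n / (β n : ℂ)) := fun x =>
    good_of_bounded hβ (norm_nonneg x) (fun n => lp.norm_apply_le_norm (by norm_num) x n)
  -- the reproducing property
  have hrep : ∀ (x : Hs) (μ : ℂ), ⟪K μ, x⟫_ℂ = Fval β (x : ℕ → ℂ) μ := by
    intro x μ
    rw [lp.inner_eq_tsum, Fval]
    apply tsum_congr
    intro i
    rw [RCLike.inner_apply, hK μ i]
    simp only [kerSeq]
    rw [map_div₀, map_pow, Complex.conj_conj, Complex.conj_ofReal]
    ring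
  have hcoeff : ∀ (y : Hs) (n : ℕ), ⟪(lp.single 2 n (1:ℂ) : Hs), y⟫_ℂ = (y : ℕ → ℂ) n := by
    intro y n
    rw [lp.inner_single_left, RCLike.inner_apply, map_one, mul_one]
  have hsingle : ∀ n j : ℕ, ((lp.single 2 n (1:ℂ) : Hs) : ℕ → ℂ) j
      = if j = n then 1 else 0 := by
    intro n j
    rcases eq_or_ne j n with h | h
    · subst h; rw [lp.single_apply_self, if_pos rfl]
    · rw [lp.single_apply_ne _ _ _ h, if_neg h]
  -- the m-th derivative of the n-th basis function at a₀
  have hDn : ∀ n : ℕ, iteratedDeriv m (Fval β ((lp.single 2 n (1:ℂ) : Hs) : ℕ → ℂ)) a₀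
      = ((n.descFactorial m : ℕ) : ℂ) * a₀ ^ (n - m) / (β n : ℂ) := by
    intro n
    rw [hFval, (hGoodx (lp.single 2 n (1:ℂ))).iteratedDeriv_psum m a₀ ha₀', psum]
    rcases le_or_gt m n with hmn | hmn
    · rw [tsum_eq_single (n - m) ?_]
      · rw [shift_iter_apply, Nat.sub_add_cancel hmn, hsingle n n, if_pos rfl]
        ring
      · intro k hk
        rw [shift_iter_apply, hsingle n (k + m), if_neg (by omega)]
        simp
    · have hzero : ∀ k : ℕ, (((k + m).descFactorial m : ℕ) : ℂ)
          * (((lp.single 2 n (1:ℂ) : Hs) : ℕ → ℂ) (k + m) / (β (k + m) : ℂ)) * a₀ ^ k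
          = 0 := by
        intro k
        rw [hsingle n (k + m), if_neg (by omega)]
        simp
      have := tsum_congr (L := SummationFilter.unconditional ℕ) hzero
      rw [show (fun k : ℕ => shift^[m]
          (fun j => ((lp.single 2 n (1:ℂ) : Hs) : ℕ → ℂ) j / (β j : ℂ)) k * a₀ ^ k)
          = fun k : ℕ => (((k + m).descFactorial m : ℕ) : ℂ)
            * (((lp.single 2 n (1:ℂ) : Hs) : ℕ → ℂ) (k + m) / (β (k + m) : ℂ)) * a₀ ^ k
          from funext fun k => by rw [shift_iter_apply]]
      rw [this, tsum_zero, Nat.descFactorial_eq_zero_iff_lt.mpr hmn]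
      simp
  -- coefficients of the adjoint applied to the kernel
  have hadj : ∀ n : ℕ, ((ContinuousLinearMap.adjoint T (K α) : Hs) : ℕ → ℂ) n
      = conj (ψ α) * (((n.descFactorial m : ℕ) : ℂ) * (conj a₀) ^ (n - m) / (β n : ℂ)) := by
    intro n
    rw [← hcoeff, ContinuousLinearMap.adjoint_inner_right, ← inner_conj_symm, hrep,
      hT _ α hα, hφdef, hDn n]
    rw [map_mul, map_div₀, map_mul, map_pow, Complex.conj_ofReal, Complex.conj_natCast]
  -- J of the kernel is a kernel
  have hJKα : J (K α) = K (w * conj α) := by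
    apply lp.ext
    funext n
    rw [hJ, Jseq, hK, hK]
    simp only [kerSeq]
    rw [map_div₀, map_pow, Complex.conj_conj, Complex.conj_ofReal, map_mul, Complex.conj_conj]
    rw [mul_pow]
    ring
  -- the value A
  set A : ℂ := iteratedDeriv m (Fval β ((K (w * conj α) : Hs) : ℕ → ℂ)) a₀ with hA
  set C₀ : ℂ := (β m : ℂ) ^ 2 * a₂ / ((m.factorial : ℂ)) ^ 2 with hC₀
  -- coefficients of T(K γ)
  have hTK : ∀ n : ℕ, ((T (K (w * conj α)) : Hs) : ℕ → ℂ) n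
      = C₀ * A * kerDSeq β m (w * conj a₀) n := by
    have hgu := hGoodx (T (K (w * conj α)))
    have hgd : Good (fun n => kerDSeq β m (w * conj a₀) n / (β n : ℂ)) :=
      good_kerD hβ m hγ₀.le
    have heq := hgu.psum_coeff_eq (hgd.const_mul (C₀ * A)) ?_
    · intro n
      have h1 := congrFun heq n
      simp only at h1
      have h2 := congrArg (fun t : ℂ => t * (β n : ℂ)) h1
      rw [div_mul_cancel₀ _ (hβne n), mul_assoc, div_mul_cancel₀ _ (hβne n)] at h2
      exact h2
    · intro z hz
      rw [← hFval, hT (K (w * conj α)) z (mem_ball_zero_iff.mpr hz), hφdef, ← hA,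
        hψdef z (mem_ball_zero_iff.mpr hz), hFval (kerDSeq β m (w * conj a₀)), psum, psum]
      have hterm : ∀ n : ℕ, C₀ * A * (kerDSeq β m (w * conj a₀) n / (β n : ℂ)) * z ^ n
          = (C₀ * A) * ((kerDSeq β m (w * conj a₀) n / (β n : ℂ)) * z ^ n) := fun n => by
        ring
      rw [tsum_congr hterm, tsum_mul_left]
      ring
  -- tsum formula for A
  have hAval : A = ∑' k : ℕ, (((k + m).descFactorial m : ℕ) : ℂ)
      * ((conj (w * conj α)) ^ (k + m) / ((β (k + m) : ℂ) * (β (k + m) : ℂ))) * a₀ ^ k := by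
    rw [hA, hFval, (hGoodx (K (w * conj α))).iteratedDeriv_psum m a₀ ha₀', psum]
    apply tsum_congr
    intro k
    rw [shift_iter_apply, hK]
    simp only [kerSeq]
    rw [div_div]
  -- the key scalar identity
  have key : ψ α * (conj w) ^ m = C₀ * A := by
    have h1 : ∀ k : ℕ, (((k + m).descFactorial m : ℕ) : ℂ)
          * ((conj (w * conj α)) ^ (k + m) / ((β (k + m) : ℂ) * (β (k + m) : ℂ))) * a₀ ^ k
        = (fun n : ℕ => (kerDSeq β m (w * conj a₀) n / (β n : ℂ)) * α ^ n * (conj w) ^ m)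
            (k + m) := by
      intro k
      simp only [kerDSeq]
      rw [if_pos (Nat.le_add_left m k), hfact (Nat.le_add_left m k), Nat.add_sub_cancel]
      rw [map_mul, Complex.conj_conj, map_mul, Complex.conj_conj]
      rw [mul_pow, mul_pow, pow_add (conj w)]
      ring
    have hsupp : Function.support
          (fun n : ℕ => (kerDSeq β m (w * conj a₀) n / (β n : ℂ)) * α ^ n * (conj w) ^ m)
        ⊆ Set.range (fun k : ℕ => k + m) := by
      intro x hx
      rcases le_or_gt m x with h | h
      · exact ⟨x - m, by simpa using Nat.sub_add_cancel h⟩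
      · exfalso
        apply hx
        simp only [kerDSeq, if_neg (not_le.mpr h), zero_div, zero_mul]
    have hre : (∑' k : ℕ, (((k + m).descFactorial m : ℕ) : ℂ)
          * ((conj (w * conj α)) ^ (k + m) / ((β (k + m) : ℂ) * (β (k + m) : ℂ))) * a₀ ^ k)
        = ∑' n : ℕ, (kerDSeq β m (w * conj a₀) n / (β n : ℂ)) * α ^ n * (conj w) ^ m := by
      rw [tsum_congr h1]
      exact Function.Injective.tsum_eq (add_left_injective m) hsupp
    rw [hψdef α hα, hAval, hre, hFval (kerDSeq β m (w * conj a₀)), psum, tsum_mul_right]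
    ring
  -- conclusion, coefficient by coefficient
  apply lp.ext
  funext n
  rw [hJKα, hJ, Jseq, hadj n, hTK n]
  rw [map_mul, Complex.conj_conj, map_div₀, map_mul, map_pow, Complex.conj_conj,
    Complex.conj_natCast, Complex.conj_ofReal]
  simp only [kerDSeq]
  rcases le_or_gt m n with hmn | hmn
  · rw [if_pos hmn, hfact hmn, ← key]
    rw [map_mul, Complex.conj_conj]
    have hpow : (conj w) ^ n = (conj w) ^ m * (conj w) ^ (n - m) := by
      rw [← pow_add]
      congr 1
      omega
    rw [hpow, mul_pow]
    ring
  · rw [if_neg (not_le.mpr hmn), Nat.descFactorial_eq_zero_iff_lt.mpr hmn]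
    simp
end
end

section
/- Suppose D_{m,ψ,φ} is bounded and J_w-symmetric on H²(β) with ψ not identically zero, and additionally D_{m,ψ,φ} is Hermitian (self-adjoint). Then conj(ψ(0)) = conj(w)^m ψ(0) and conj(ψ(0) φ(0)) = conj(w)^{m+1} ψ(0) φ(0); in particular if ψ(0)φ(0) ≠ 0 then conj(φ(0)) = conj(w) φ(0). -/
open Complex Metric
open scoped InnerProductSpace ComplexConjugate

noncomputable section

lemma iter_deriv_cmul (c : ℂ) (f : ℂ → ℂ) (m : ℕ) :
    deriv^[m] (fun z => c * f z) = fun z => c * deriv^[m] f z := by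
  induction m generalizing f with
  | zero => rfl
  | succ n ih =>
    rw [Function.iterate_succ_apply, Function.iterate_succ_apply,
      deriv_const_mul_field' (v := f) c, ih (deriv f)]

lemma iterDeriv_cmul_pow (c : ℂ) (k m : ℕ) (α : ℂ) :
    iteratedDeriv m (fun z : ℂ => c * z ^ k) α
      = c * ((∏ i ∈ Finset.range m, ((k : ℂ) - i)) * α ^ (k - m)) := by
  rw [iteratedDeriv_eq_iterate, iter_deriv_cmul]
  simp only [iter_deriv_pow]

lemma Fval_supported (β : ℕ → ℝ) (k : ℕ) (c : ℂ) (x : ℕ → ℂ)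
    (hx : ∀ n, x n = if n = k then c else 0) :
    Fval β x = fun z => (c / (β k : ℂ)) * z ^ k := by
  funext z
  unfold Fval
  rw [tsum_eq_single k]
  · rw [hx k, if_pos rfl]
  · intro n hn
    rw [hx n, if_neg hn, zero_div, zero_mul]

lemma Fval_at_zero (β : ℕ → ℝ) (hβ0 : β 0 = 1) (x : ℕ → ℂ) : Fval β x 0 = x 0 := by
  unfold Fval
  rw [tsum_eq_single 0]
  · simp [hβ0]
  · intro n hn
    simp [zero_pow hn]

/-- if a `J_w`-symmetric `D_{m,ψ,φ}` is Hermitian then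
`conj ψ(0) = conj(w)^m ψ(0)`, `conj(ψ(0)φ(0)) = conj(w)^{m+1} ψ(0)φ(0)`, and if
`ψ(0)φ(0) ≠ 0` then `conj φ(0) = conj w · φ(0)`. -/
theorem stmt15 (β : ℕ → ℝ) (hβ : WeightOK β) (m : ℕ) (hm : 1 ≤ m)
    (w : ℂ) (hw : ‖w‖ = 1)
    (ψ φ : ℂ → ℂ) (hφ : SelfMapD φ) (hψa : AnalyticOnNhd ℂ ψ (ball 0 1))
    (hψ0 : ∃ z ∈ ball (0:ℂ) 1, ψ z ≠ 0)
    (T : Hs →L[ℂ] Hs) (hT : IsGWCO β m ψ φ T)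
    (J : Hs → Hs) (hJ : ∀ (x : Hs) (n : ℕ), (J x : ℕ → ℂ) n = Jseq w (x : ℕ → ℂ) n)
    (hsym : ∀ x : Hs, T x = J (ContinuousLinearMap.adjoint T (J x)))
    (hherm : ContinuousLinearMap.adjoint T = T) :
    conj (ψ 0) = (conj w) ^ m * ψ 0 ∧
    conj (ψ 0 * φ 0) = (conj w) ^ (m + 1) * (ψ 0 * φ 0) ∧
    (ψ 0 * φ 0 ≠ 0 → conj (φ 0) = conj w * φ 0) := by
  obtain ⟨hβpos, hβ0, -⟩ := hβ
  have h0mem : (0 : ℂ) ∈ ball (0 : ℂ) 1 := by simp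
  have hww : w * conj w = 1 := by
    rw [Complex.mul_conj, Complex.normSq_eq_norm_sq, hw]; norm_num
  have hwpow : ∀ j : ℕ, w ^ j * conj w ^ j = 1 := by
    intro j; rw [← mul_pow, hww, one_pow]
  -- the key identity for single basis vectors
  have key : ∀ k : ℕ, m ≤ k →
      ψ 0 * φ 0 ^ (k - m) = conj (ψ 0) * w ^ k * conj (φ 0) ^ (k - m) := by
    intro k hk
    set x : Hs := lp.single 2 k (1 : ℂ) with hxdef
    have hxco : ∀ n, (x : ℕ → ℂ) n = if n = k then (1 : ℂ) else 0 := by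
      intro n
      rw [lp.single_apply]
      by_cases h : n = k <;> simp [h]
    have hJco : ∀ n, ((J x : Hs) : ℕ → ℂ) n
        = if n = k then (conj w) ^ k else 0 := by
      intro n
      simp only [hJ, Jseq, hxco n]
      by_cases h : n = k <;> simp [h]
    have hFx : Fval β (x : ℕ → ℂ) = fun z => ((1 : ℂ) / (β k : ℂ)) * z ^ k :=
      Fval_supported β k 1 _ hxco
    have hFJx : Fval β ((J x : Hs) : ℕ → ℂ)
        = fun z => ((conj w) ^ k / (β k : ℂ)) * z ^ k :=
      Fval_supported β k _ _ hJco
    -- coefficient 0 of T x computed two ways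
    have hTx0 : ((T x : Hs) : ℕ → ℂ) 0
        = ψ 0 * iteratedDeriv m (Fval β (x : ℕ → ℂ)) (φ 0) := by
      have h := hT x 0 h0mem
      rwa [Fval_at_zero β hβ0] at h
    have hTJ0 : ((T (J x) : Hs) : ℕ → ℂ) 0
        = ψ 0 * iteratedDeriv m (Fval β ((J x : Hs) : ℕ → ℂ)) (φ 0) := by
      have h := hT (J x) 0 h0mem
      rwa [Fval_at_zero β hβ0] at h
    have hsx : ((T x : Hs) : ℕ → ℂ) 0 = conj (((T (J x) : Hs) : ℕ → ℂ) 0) := by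
      have h1 : T x = J (T (J x)) := by rw [hsym x, hherm]
      rw [h1, hJ, Jseq, pow_zero, mul_one]
    rw [hTx0, hTJ0, hFx, hFJx, iterDeriv_cmul_pow, iterDeriv_cmul_pow] at hsx
    set P : ℂ := ∏ i ∈ Finset.range m, ((k : ℂ) - i) with hP
    have hPne : P ≠ 0 := by
      rw [hP, Finset.prod_ne_zero_iff]
      intro i hi
      rw [sub_ne_zero]
      exact_mod_cast Nat.ne_of_gt (lt_of_lt_of_le (Finset.mem_range.mp hi) hk)
    have hβkne : ((β k : ℝ) : ℂ) ≠ 0 := by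
      exact_mod_cast (hβpos k).ne'
    have hconjP : conj P = P := by
      rw [hP, map_prod]
      exact Finset.prod_congr rfl fun i _ => by simp
    have hconjβ : conj ((β k : ℝ) : ℂ) = ((β k : ℝ) : ℂ) := Complex.conj_ofReal _
    have hconj : conj (ψ 0 * ((conj w) ^ k / (β k : ℂ) * (P * φ 0 ^ (k - m))))
        = conj (ψ 0) * (w ^ k / (β k : ℂ) * (P * conj (φ 0) ^ (k - m))) := by
      simp only [map_mul, map_pow, map_div₀, Complex.conj_conj, hconjβ, hconjP]
    rw [hconj] at hsx
    have hcan : (1 / (β k : ℂ)) * P ≠ 0 :=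
      mul_ne_zero (one_div_ne_zero hβkne) hPne
    have e1 : ψ 0 * ((1 : ℂ) / (β k : ℂ) * (P * φ 0 ^ (k - m)))
        = ((1 / (β k : ℂ)) * P) * (ψ 0 * φ 0 ^ (k - m)) := by ring
    have e2 : conj (ψ 0) * (w ^ k / (β k : ℂ) * (P * conj (φ 0) ^ (k - m)))
        = ((1 / (β k : ℂ)) * P) * (conj (ψ 0) * w ^ k * conj (φ 0) ^ (k - m)) := by
      ring
    rw [e1, e2] at hsx
    exact mul_left_cancel₀ hcan hsx
  have h1 := key m le_rfl
  have h2 := key (m + 1) (Nat.le_succ m)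
  simp only [Nat.sub_self, pow_zero, mul_one] at h1
  simp only [Nat.add_sub_cancel_left, pow_one] at h2
  refine ⟨?_, ?_, ?_⟩
  · linear_combination (-(conj w) ^ m) * h1 - conj (ψ 0) * hwpow m
  · rw [map_mul]
    linear_combination (-(conj w) ^ (m + 1)) * h2
      - conj (ψ 0) * conj (φ 0) * hwpow (m + 1)
  · intro hne
    have hψne : ψ 0 ≠ 0 := fun h => hne (by rw [h, zero_mul])
    have hcψne : conj (ψ 0) ≠ 0 := by
      simpa using hψne
    have hwne' : w ≠ 0 := by
      intro h; rw [h, zero_mul] at hww; exact one_ne_zero hww.symm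
    have step : conj (ψ 0) * w ^ m * (w * conj (φ 0)) = conj (ψ 0) * w ^ m * φ 0 := by
      linear_combination (-1 : ℂ) * h2 + φ 0 * h1
    have hc : conj (ψ 0) * w ^ m ≠ 0 := mul_ne_zero hcψne (pow_ne_zero m hwne')
    have step2 : w * conj (φ 0) = φ 0 := mul_left_cancel₀ hc step
    linear_combination conj w * step2 - conj (φ 0) * hww
end
end
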